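/- arXiv:0706.3515 — 11 statements merged into one kernel-verified Lean document; each statement's English description precedes it below -/
import Mathlib

section
/- Let $K$ be a division ring and $R = K[t]$ the polynomial ring (with $t$ central). Every nonzero polynomial $f \in R$ of degree $n$ has right roots (elements $a \in K$ with $f \in R(t-a)$) lying in at most $n$ conjugacy classes of $K$. -/
open Polynomial

section aux
variable {K : Type*} [DivisionRing K]

lemma Xpow_factor (a : K) : ∀ n : ℕ, ∃ q : K[X], (X : K[X])^n = q * (X - C a) + C (a^n)
  | 0 => ⟨0, by simp⟩
  | (n+1) => by
    obtain ⟨q, h⟩ := Xpow_factor a n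
    refine ⟨q * X + C (a^n), ?_⟩
    calc (X : K[X])^(n+1) = X * X^n := by rw [pow_succ, (commute_X _).eq]
    _ = X * (q * (X - C a) + C (a^n)) := by rw [h]
    _ = (q * X) * (X - C a) + C (a^n) * X := by
        rw [mul_add, ← (commute_X q).eq, mul_assoc, (commute_X (C (a^n))).eq]
    _ = (q * X) * (X - C a) + (C (a^n) * (X - C a) + C (a^n) * C a) := by
        rw [← mul_add, sub_add_cancel]
    _ = (q * X + C (a^n)) * (X - C a) + C (a^(n+1)) := by
        rw [add_mul, ← C_mul, ← pow_succ, add_assoc]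

lemma right_factor (p : K[X]) (a : K) : ∃ q : K[X], p = q * (X - C a) + C (p.eval a) := by
  induction p using Polynomial.induction_on' with
  | add p r hp hr =>
    obtain ⟨q1, h1⟩ := hp; obtain ⟨q2, h2⟩ := hr
    refine ⟨q1 + q2, ?_⟩
    rw [eval_add, C_add, add_mul]
    conv_lhs => rw [h1, h2]
    abel
  | monomial n c =>
    obtain ⟨q, h⟩ := Xpow_factor a n
    refine ⟨C c * q, ?_⟩
    rw [eval_monomial, ← C_mul_X_pow_eq_monomial, h, mul_add, ← mul_assoc, ← C_mul]

lemma conj_pow_key (a b : K) (n : ℕ) :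
    (b - a) * b^n = ((b - a) * b * (b - a)⁻¹)^n * (b - a) := by
  rcases eq_or_ne b a with rfl | hba
  · simp
  have hd : b - a ≠ 0 := sub_ne_zero.mpr hba
  have h := Units.conj_pow (Units.mk0 (b - a) hd) b n
  rw [Units.val_inv_eq_inv_val, Units.val_mk0] at h
  rw [h, mul_assoc, inv_mul_cancel₀ hd, mul_one]

lemma eval_mul_X_sub_C' (a b : K) (g : K[X]) :
    (g * (X - C a)).eval b = g.eval ((b - a) * b * (b - a)⁻¹) * (b - a) := by
  induction g using Polynomial.induction_on' with
  | add p r hp hr => rw [add_mul, eval_add, eval_add, hp, hr, add_mul]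
  | monomial n c =>
    have h1 : (monomial n c : K[X]) * (X - C a) = monomial (n+1) c - monomial n (c * a) := by
      rw [mul_sub, monomial_mul_X, monomial_mul_C]
    have h2 : (b - a) * b^n = b^(n+1) - a * b^n := by rw [sub_mul, ← pow_succ']
    rw [h1, eval_sub]
    simp only [eval_monomial]
    rw [mul_assoc c a, ← mul_sub, ← h2, conj_pow_key a b n, ← mul_assoc]

lemma aux_main (n : ℕ) : ∀ f : K[X], f ≠ 0 → f.natDegree ≤ n →
    ∃ s : Finset K, s.card ≤ f.natDegree ∧
      ∀ a : K, f.eval a = 0 → ∃ b ∈ s, ∃ c : Kˣ, a = c * b * (c : K)⁻¹ := by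
  induction n with
  | zero =>
    intro f hf hdeg
    refine ⟨∅, by simp, fun a ha => ?_⟩
    exfalso
    have hC := eq_C_of_natDegree_le_zero hdeg
    rw [hC, eval_C] at ha
    exact hf (by rw [hC, ha, map_zero])
  | succ n ih =>
    intro f hf hdeg
    classical
    by_cases hroot : ∃ a : K, f.eval a = 0
    · obtain ⟨a, ha⟩ := hroot
      obtain ⟨g, hg⟩ := right_factor f a
      rw [ha, map_zero, add_zero] at hg
      have hg0 : g ≠ 0 := by rintro rfl; rw [zero_mul] at hg; exact hf hg
      have hdf : f.natDegree = g.natDegree + 1 := by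
        rw [hg, natDegree_mul' (by
          rw [(monic_X_sub_C a).leadingCoeff, mul_one]
          exact leadingCoeff_ne_zero.mpr hg0), natDegree_X_sub_C]
      obtain ⟨s, hs, hmem⟩ := ih g hg0 (by omega)
      refine ⟨insert a s, ?_, ?_⟩
      · calc (insert a s).card ≤ s.card + 1 := Finset.card_insert_le _ _
        _ ≤ g.natDegree + 1 := by omega
        _ = f.natDegree := hdf.symm
      · intro b hb
        rcases eq_or_ne b a with rfl | hba
        · exact ⟨b, Finset.mem_insert_self _ _, 1, by simp⟩
        · have hd : b - a ≠ 0 := sub_ne_zero.mpr hba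
          have hzero := hb
          rw [hg, eval_mul_X_sub_C' a b] at hzero
          have hroot' : g.eval ((b - a) * b * (b - a)⁻¹) = 0 := by
            rcases mul_eq_zero.mp hzero with h | h
            · exact h
            · exact absurd h hd
          obtain ⟨b', hb's, c, hc⟩ := hmem _ hroot'
          refine ⟨b', Finset.mem_insert_of_mem hb's, (Units.mk0 (b - a) hd)⁻¹ * c, ?_⟩
          have h1 : (((Units.mk0 (b - a) hd)⁻¹ * c : Kˣ) : K) = (b - a)⁻¹ * (c : K) := by
            simp
          rw [h1, mul_inv_rev, inv_inv]
          have h3 : (b - a)⁻¹ * (c : K) * b' * ((c : K)⁻¹ * (b - a))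
              = (b - a)⁻¹ * ((c : K) * b' * (c : K)⁻¹) * (b - a) := by
            simp [mul_assoc]
          rw [h3, ← hc]
          have h4 : (b - a)⁻¹ * ((b - a) * b * (b - a)⁻¹) * (b - a) = b := by
            rw [mul_assoc ((b - a)⁻¹) ((b - a) * b * (b - a)⁻¹) (b - a),
              mul_assoc ((b - a) * b) ((b - a)⁻¹) (b - a), inv_mul_cancel₀ hd, mul_one,
              ← mul_assoc, inv_mul_cancel₀ hd, one_mul]
          exact h4.symm
    · push_neg at hroot
      exact ⟨∅, by simp, fun a ha => absurd ha (hroot a)⟩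
end aux

theorem stmt_2 {K : Type*} [DivisionRing K] (f : K[X]) (hf : f ≠ 0) :
    ∃ s : Finset K, s.card ≤ f.natDegree ∧
      ∀ a : K, f.eval a = 0 → ∃ b ∈ s, ∃ c : Kˣ, a = c * b * (c : K)⁻¹ := by
  exact aux_main f.natDegree f hf le_rfl
end

section
/- Let $K$ be a division ring, $a \in K$, and $C = C_K(a)$ its centralizer (a division subring of $K$). For a polynomial $h \in K[t]$, the map $\lambda_{h,a} : K \to K$ defined by $\lambda_{h,a}(x) = h(xax^{-1})\,x$ for $x \neq 0$ and $\lambda_{h,a}(0) = 0$ is right $C$-linear, and its kernel is $\{x \in K \setminus \{0\} : h(xax^{-1}) = 0\} \cup \{0\}$, where $h(b)$ denotes the right evaluation $\sum h_i b^i$ for $h = \sum h_i t^i$. -/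
open Polynomial

/-- The map `λ_{h,a}` sending `x ≠ 0` to `h(x a x⁻¹) x` and `0` to `0`. -/
noncomputable def lambdaMap {K : Type*} [DivisionRing K] [DecidableEq K] (h : K[X]) (a : K) (x : K) : K :=
  if x = 0 then 0 else h.eval (x * a * x⁻¹) * x

lemma conj_pow_aux {K : Type*} [DivisionRing K] (x a : K) (hx : x ≠ 0) (n : ℕ) :
    (x * a * x⁻¹) ^ n = x * a ^ n * x⁻¹ := by
  induction n with
  | zero => simp [mul_inv_cancel₀ hx]
  | succ n ih =>
      rw [pow_succ, ih, pow_succ, mul_assoc (x * a ^ n), ← mul_assoc x⁻¹ (x * a),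
        ← mul_assoc x⁻¹ x, inv_mul_cancel₀ hx, one_mul, ← mul_assoc, mul_assoc x (a ^ n) a]

lemma lambdaMap_eq_sum {K : Type*} [DivisionRing K] [DecidableEq K] (h : K[X]) (a x : K) :
    lambdaMap h a x = ∑ i ∈ h.support, h.coeff i * x * a ^ i := by
  unfold lambdaMap
  by_cases hx : x = 0
  · simp [hx]
  · rw [if_neg hx, Polynomial.eval_eq_sum, Polynomial.sum, Finset.sum_mul]
    refine Finset.sum_congr rfl fun i _ => ?_
    rw [conj_pow_aux x a hx]
    simp [mul_assoc, inv_mul_cancel₀ hx]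

theorem stmt_3 {K : Type*} [DivisionRing K] [DecidableEq K] (h : K[X]) (a : K) :
    (∀ x y : K, lambdaMap h a (x + y) = lambdaMap h a x + lambdaMap h a y) ∧
    (∀ x c : K, c * a = a * c → lambdaMap h a (x * c) = lambdaMap h a x * c) ∧
    {x : K | lambdaMap h a x = 0} =
      {x : K | x ≠ 0 ∧ h.eval (x * a * x⁻¹) = 0} ∪ {0} := by
  refine ⟨fun x y => ?_, fun x c hc => ?_, ?_⟩
  · simp only [lambdaMap_eq_sum, ← Finset.sum_add_distrib]
    exact Finset.sum_congr rfl fun i _ => by simp [mul_add, add_mul]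
  · have hca : ∀ i : ℕ, c * a ^ i = a ^ i * c := fun i => by
      induction i with
      | zero => simp
      | succ n ih => rw [pow_succ, ← mul_assoc, ih, mul_assoc, hc, ← mul_assoc]
    simp only [lambdaMap_eq_sum, Finset.sum_mul]
    refine Finset.sum_congr rfl fun i _ => ?_
    rw [mul_assoc, mul_assoc, hca, ← mul_assoc, ← mul_assoc]
  · ext x
    simp only [Set.mem_setOf_eq, Set.mem_union, Set.mem_singleton_iff, lambdaMap]
    by_cases hx : x = 0
    · simp [hx]
    · simp [hx, mul_eq_zero]
end

section
/- Let $K$ be a division ring, $a \in K$, and $f, g \in K[t]$. Then $\lambda_{fg,a} = \lambda_{f,a} \circ \lambda_{g,a}$ on the domain where defined; precisely, for every nonzero $x \in K$ with $g(xax^{-1}) \neq 0$, one has $(fg)(xax^{-1})\,x = f\big(y a y^{-1}\big)\, y$ where $y = g(xax^{-1})x$. -/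
open Polynomial

private lemma conj_pow' {K : Type*} [DivisionRing K] (h b : K) (hh : h ≠ 0) (n : ℕ) :
    (h * b * h⁻¹) ^ n = h * b ^ n * h⁻¹ := by
  induction n with
  | zero => simp [mul_inv_cancel₀ hh]
  | succ n ih =>
      rw [pow_succ, ih, pow_succ]
      simp [mul_assoc, inv_mul_cancel_left₀ hh]

private lemma key_lemma {K : Type*} [DivisionRing K] (g : K[X]) (b : K)
    (hg : g.eval b ≠ 0) (f : K[X]) :
    (f * g).eval b = f.eval (g.eval b * b * (g.eval b)⁻¹) * g.eval b := by
  induction f using Polynomial.induction_on with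
  | C c => simp [eval_C_mul]
  | add p q hp hq => simp [add_mul, hp, hq]
  | monomial n c _ =>
      rw [mul_assoc, X_pow_mul, ← mul_assoc, eval_C_mul, eval_mul_X_pow,
        eval_C_mul, X_pow_eq_monomial, eval_monomial, one_mul, conj_pow' _ _ hg]
      simp [mul_assoc, inv_mul_cancel₀ hg]

theorem stmt_4 {K : Type*} [DivisionRing K] (f g : K[X]) (a : K)
    (x : K) (hx : x ≠ 0) (hg : g.eval (x * a * x⁻¹) ≠ 0) :
    (f * g).eval (x * a * x⁻¹) * x =
      f.eval ((g.eval (x * a * x⁻¹) * x) * a * (g.eval (x * a * x⁻¹) * x)⁻¹) *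
        (g.eval (x * a * x⁻¹) * x) := by
  set b := x * a * x⁻¹ with hb
  have hconj : (g.eval b * x) * a * (g.eval b * x)⁻¹ = g.eval b * b * (g.eval b)⁻¹ := by
    rw [mul_inv_rev, hb]
    simp [mul_assoc]
  rw [hconj, key_lemma g b hg f, mul_assoc]
end

section
/- Let $K$ be a division ring and let $f = \prod_{i=n}^{1} (t - a_i) = (t-a_n)(t-a_{n-1})\cdots(t-a_1)$ in $K[t]$. Then the companion matrix $C_f$ of $f$ is similar over $K$ to the upper bidiagonal matrix with diagonal entries $a_1, a_2, \dots, a_n$ and $1$'s on the superdiagonal. -/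
open Polynomial

/-- The companion matrix of a (monic, degree `n`) polynomial `f`:
`1`'s on the superdiagonal, last row `(-a₀, …, -a_{n-1})`, zeros elsewhere. -/
def companionMatrix {K : Type*} [DivisionRing K] (n : ℕ) (f : K[X]) :
    Matrix (Fin n) (Fin n) K := fun i j =>
  if (i : ℕ) + 1 = (j : ℕ) then 1
  else if (i : ℕ) = n - 1 then -f.coeff (j : ℕ)
  else 0

/-- The upper bidiagonal matrix with diagonal `a` and `1`'s on the superdiagonal. -/
def upperBidiagonal {K : Type*} [DivisionRing K] {n : ℕ} (a : Fin n → K) :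
    Matrix (Fin n) (Fin n) K := fun i j =>
  if i = j then a i else if (i : ℕ) + 1 = (j : ℕ) then 1 else 0

namespace Stmt7Aux

variable {K : Type*} [DivisionRing K]

/-- `q a i = (X - C (a (i-1))) ⋯ (X - C (a 0))`. -/
noncomputable def q (a : ℕ → K) : ℕ → K[X]
  | 0 => 1
  | (i+1) => (X - C (a i)) * q a i

lemma q_monic (a : ℕ → K) (i : ℕ) : (q a i).Monic := by
  induction i with
  | zero => exact monic_one
  | succ i ih => exact (monic_X_sub_C _).mul ih

lemma q_natDegree (a : ℕ → K) (i : ℕ) : (q a i).natDegree = i := by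
  induction i with
  | zero => simp [q]
  | succ i ih =>
    rw [q, (monic_X_sub_C _).natDegree_mul (q_monic a i), natDegree_X_sub_C, ih, add_comm]

lemma q_coeff_self (a : ℕ → K) (i : ℕ) : (q a i).coeff i = 1 := by
  have := (q_monic a i).coeff_natDegree
  rwa [q_natDegree] at this

lemma q_coeff_zero_of_lt (a : ℕ → K) {i j : ℕ} (h : i < j) : (q a i).coeff j = 0 :=
  coeff_eq_zero_of_natDegree_lt (by rwa [q_natDegree])

lemma q_eq (a : ℕ → K) (n : ℕ) :
    ((List.ofFn fun i : Fin n => X - C (a i)).reverse).prod = q a n := by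
  induction n with
  | zero => simp [q]
  | succ n ih =>
    rw [List.ofFn_succ', List.concat_eq_append, List.reverse_append]
    simp only [List.reverse_cons, List.reverse_nil, List.nil_append, List.singleton_append,
      List.prod_cons, Fin.coe_castSucc, Fin.val_last, ih]
    rfl

lemma sum_ite_coe {M : Type*} [AddCommMonoid M] {n : ℕ} (m : ℕ) (g : Fin n → M) :
    (∑ k : Fin n, if (k : ℕ) = m then g k else 0) =
      if h : m < n then g ⟨m, h⟩ else 0 := by
  split_ifs with h
  · rw [Finset.sum_eq_single (⟨m, h⟩ : Fin n)]
    · simp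
    · intro k _ hk
      rw [if_neg]
      simpa [Fin.ext_iff] using hk
    · simp
  · apply Finset.sum_eq_zero
    intro k _
    have := k.isLt
    rw [if_neg (by omega)]

lemma sum_ite_succ {M : Type*} [AddCommMonoid M] {n : ℕ} (m : ℕ) (g : Fin n → M) :
    (∑ k : Fin n, if (k : ℕ) + 1 = m then g k else 0) =
      if h : m - 1 < n ∧ 0 < m then g ⟨m - 1, h.1⟩ else 0 := by
  split_ifs with h
  · rw [Finset.sum_eq_single (⟨m - 1, h.1⟩ : Fin n)]
    · simp only [Fin.val_mk]
      rw [if_pos (by omega)]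
    · intro k _ hk
      rw [if_neg]
      intro hc
      exact hk (Fin.ext (by simp only [Fin.val_mk]; omega))
    · simp
  · apply Finset.sum_eq_zero
    intro k _
    have := k.isLt
    rw [if_neg (by omega)]

lemma strictLower_pow {n : ℕ} (N : Matrix (Fin n) (Fin n) K)
    (hN : ∀ i j : Fin n, (i : ℕ) ≤ (j : ℕ) → N i j = 0) (k : ℕ) :
    ∀ i j : Fin n, (i : ℕ) < (j : ℕ) + k → (N ^ k) i j = 0 := by
  induction k with
  | zero =>
    intro i j h
    rw [pow_zero, Matrix.one_apply, if_neg]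
    intro hij; subst hij; omega
  | succ k ih =>
    intro i j h
    rw [pow_succ', Matrix.mul_apply]
    apply Finset.sum_eq_zero
    intro m _
    by_cases hm : (i : ℕ) ≤ (m : ℕ)
    · rw [hN i m hm, zero_mul]
    · rw [ih m j (by omega), mul_zero]

end Stmt7Aux

open Stmt7Aux in
theorem stmt_7 {K : Type*} [DivisionRing K] {n : ℕ} (a : Fin n → K)
    (f : K[X]) (hf : f = ((List.ofFn fun i : Fin n => X - C (a i)).reverse).prod) :
    ∃ P : (Matrix (Fin n) (Fin n) K)ˣ,
      upperBidiagonal a = P.val * companionMatrix n f * P.inv := by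
  classical
  set a' : ℕ → K := fun i => if h : i < n then a ⟨i, h⟩ else 0 with ha'
  have ha : ∀ i : Fin n, a' (i : ℕ) = a i := fun i => by simp [ha', i.isLt]
  have hfq : f = q a' n := by
    rw [hf, show (fun i : Fin n => X - C (a i)) = fun i : Fin n => X - C (a' (i : ℕ)) from
      funext fun i => by rw [ha], q_eq]
  set P : Matrix (Fin n) (Fin n) K := fun i j => (q a' (i : ℕ)).coeff (j : ℕ) with hPdef
  -- P is unipotent lower triangular, hence a unit
  have hN : ∀ i j : Fin n, (i : ℕ) ≤ (j : ℕ) → (P - 1) i j = 0 := by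
    intro i j hij
    rw [Matrix.sub_apply, Matrix.one_apply]
    rcases eq_or_lt_of_le hij with h | h
    · rw [if_pos (Fin.ext h), hPdef]
      simp only [h, q_coeff_self, sub_self]
    · rw [if_neg (by intro he; subst he; omega), hPdef]
      simp only [q_coeff_zero_of_lt a' h, sub_zero]
  have hnil : IsNilpotent (P - 1) := by
    refine ⟨n, ?_⟩
    ext i j
    rw [Matrix.zero_apply]
    exact strictLower_pow (P - 1) hN n i j (by have := i.isLt; omega)
  have hPunit : IsUnit P := by
    have := hnil.isUnit_one_add
    rwa [add_sub_cancel] at this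
  obtain ⟨u, hu⟩ := hPunit
  -- the key intertwining identity
  have key : upperBidiagonal a * P = P * companionMatrix n f := by
    ext i j
    rw [Matrix.mul_apply, Matrix.mul_apply]
    have hi := i.isLt
    have hj := j.isLt
    have hL : ∀ k : Fin n, upperBidiagonal a i k * P k j
        = (if (k : ℕ) = (i : ℕ) then a i * (q a' (k : ℕ)).coeff (j : ℕ) else 0)
          + (if (k : ℕ) = (i : ℕ) + 1 then (q a' (k : ℕ)).coeff (j : ℕ) else 0) := by
      intro k
      have hk := k.isLt
      simp only [upperBidiagonal, hPdef, Fin.ext_iff]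
      split_ifs <;> first | omega | simp
    have hR : ∀ k : Fin n, P i k * companionMatrix n f k j
        = (if (k : ℕ) + 1 = (j : ℕ) then (q a' (i : ℕ)).coeff (k : ℕ) else 0)
          + (if (k : ℕ) = n - 1 then (q a' (i : ℕ)).coeff (k : ℕ) * (-f.coeff (j : ℕ))
              else 0) := by
      intro k
      have hk := k.isLt
      simp only [companionMatrix, hPdef]
      split_ifs <;> first | omega | simp
    simp only [hL, hR]
    rw [Finset.sum_add_distrib, Finset.sum_add_distrib, sum_ite_coe, sum_ite_coe,
      sum_ite_succ, sum_ite_coe]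
    rw [dif_pos hi, dif_pos (show n - 1 < n by omega)]
    simp only [Fin.val_mk]
    have hcoeff : ∀ (m i' : ℕ), (q a' (i' + 1)).coeff m
        = (X * q a' i').coeff m - a' i' * (q a' i').coeff m := by
      intro m i'
      show ((X - C (a' i')) * q a' i').coeff m = _
      rw [sub_mul, coeff_sub, coeff_C_mul]
    have hXc : (X * q a' (i : ℕ)).coeff (j : ℕ)
        = if h : (j : ℕ) - 1 < n ∧ 0 < (j : ℕ) then (q a' (i : ℕ)).coeff ((j : ℕ) - 1)
          else 0 := by
      rcases Nat.eq_zero_or_pos (j : ℕ) with h0 | h0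
      · rw [dif_neg (by omega), h0, mul_coeff_zero, coeff_X_zero, zero_mul]
      · obtain ⟨m, hm⟩ := Nat.exists_eq_succ_of_ne_zero (by omega : (j : ℕ) ≠ 0)
        rw [hm, coeff_X_mul, dif_pos (by omega)]
        simp
    rw [← hXc]
    by_cases h1 : (i : ℕ) + 1 < n
    · rw [dif_pos h1, hcoeff, q_coeff_zero_of_lt a' (show (i : ℕ) < n - 1 by omega), ha]
      simp only [zero_mul, one_mul, add_zero, neg_sub]
      abel
    · rw [dif_neg h1]
      have hn1 : n - 1 = (i : ℕ) := by omega
      have hfn : f = q a' ((i : ℕ) + 1) := by rw [hfq]; congr 1; omega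
      rw [hn1, q_coeff_self, hfn, hcoeff, ha]
      simp only [zero_mul, one_mul, add_zero, neg_sub]
      abel
  refine ⟨u, ?_⟩
  calc upperBidiagonal a = upperBidiagonal a * (u.val * u.inv) := by
        rw [u.val_inv, mul_one]
    _ = (upperBidiagonal a * u.val) * u.inv := by rw [mul_assoc]
    _ = (u.val * companionMatrix n f) * u.inv := by rw [hu, key]
end

section
/- Let $K$ be a division ring and $f = gh$ with $g, h \in K[t]$ monic of degrees $l$ and $n$. Then the companion matrix $C_f$ is similar over $K$ to the block matrix $\begin{pmatrix} C_h & E \\ 0 & C_g \end{pmatrix}$ where $E \in M_{n \times l}(K)$ has a $1$ in its bottom-left corner and zeros elsewhere. -/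
open Polynomial

section Helpers
variable {K : Type*} [DivisionRing K]

lemma finValMk {m x : ℕ} (h : x < m) : ((⟨x, h⟩ : Fin m) : ℕ) = x := rfl

lemma sum_eq_of_ne {m : ℕ} {F : Fin m → K} {t : ℕ} (ht : t < m)
    (hF : ∀ j : Fin m, (j : ℕ) ≠ t → F j = 0) : ∑ j, F j = F ⟨t, ht⟩ :=
  Finset.sum_eq_single_of_mem ⟨t, ht⟩ (Finset.mem_univ _)
    (fun b _ hb => hF b (fun hbt => hb (Fin.ext hbt)))

lemma companion_apply_decomp {m : ℕ} (f : K[X]) (i j : Fin m) :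
    companionMatrix m f i j =
      (if (i:ℕ)+1 = (j:ℕ) then 1 else 0) + (if (i:ℕ) = m - 1 then -f.coeff (j:ℕ) else 0) := by
  have hj := j.isLt
  unfold companionMatrix
  by_cases h1 : (i:ℕ)+1 = (j:ℕ)
  · have h2 : (i:ℕ) ≠ m-1 := by omega
    simp [h1, h2]
  · simp [h1]

lemma mul_companion {m : ℕ} (hm : 0 < m) (f : K[X]) (v : Fin m → K) (k : Fin m) :
    (∑ j, v j * companionMatrix m f j k) =
      (if hk : 1 ≤ (k:ℕ) then v ⟨(k:ℕ)-1, lt_of_le_of_lt (Nat.sub_le _ _) k.isLt⟩ else 0)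
        - v ⟨m-1, by omega⟩ * f.coeff (k:ℕ) := by
  have hk' := k.isLt
  simp only [companion_apply_decomp, mul_add, Finset.sum_add_distrib]
  rw [sub_eq_add_neg]
  congr 1
  · by_cases hk : 1 ≤ (k:ℕ)
    · rw [sum_eq_of_ne (t := (k:ℕ)-1) (lt_of_le_of_lt (Nat.sub_le _ _) k.isLt)
        (fun j hj => by rw [if_neg (by omega), mul_zero])]
      rw [dif_pos hk, if_pos (show ((k:ℕ)-1)+1 = (k:ℕ) by omega), mul_one]
    · rw [dif_neg hk]
      exact Finset.sum_eq_zero fun j _ => by rw [if_neg (by omega), mul_zero]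
  · rw [sum_eq_of_ne (t := m-1) (by omega) (fun j hj => by rw [if_neg hj, mul_zero]),
      if_pos rfl, mul_neg]

lemma companion_mul {m : ℕ} (f : K[X]) (i : Fin m) (w : Fin m → K) :
    (∑ j, companionMatrix m f i j * w j) =
      (if hk : (i:ℕ)+1 < m then w ⟨(i:ℕ)+1, hk⟩ else 0)
        + (if (i:ℕ) = m-1 then ∑ j : Fin m, -f.coeff (j:ℕ) * w j else 0) := by
  simp only [companion_apply_decomp, add_mul, Finset.sum_add_distrib]
  congr 1
  · by_cases hk : (i:ℕ)+1 < m
    · rw [sum_eq_of_ne (t := (i:ℕ)+1) hk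
        (fun j hj => by rw [if_neg (fun hc => hj hc.symm), zero_mul]),
        dif_pos hk, if_pos rfl, one_mul]
    · rw [dif_neg hk]
      exact Finset.sum_eq_zero fun j _ => by
        rw [if_neg (by have := j.isLt; omega), zero_mul]
  · by_cases hi : (i:ℕ) = m-1
    · simp [hi]
    · simp [hi]

def Pmat (n l : ℕ) (h : K[X]) : Matrix (Fin (n+l)) (Fin (n+l)) K := fun i j =>
  if (i:ℕ) < n then (if (i:ℕ) = (j:ℕ) then 1 else 0)
  else if (i:ℕ) - n ≤ (j:ℕ) then h.coeff ((j:ℕ) - ((i:ℕ) - n)) else 0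

lemma pow_strictLower {m : ℕ} (L : Matrix (Fin m) (Fin m) K)
    (hL : ∀ i j : Fin m, (i:ℕ) ≤ (j:ℕ) → L i j = 0) :
    ∀ k (i j : Fin m), (i:ℕ) < (j:ℕ) + k → (L^k) i j = 0 := by
  intro k
  induction k with
  | zero =>
    intro i j hij
    rw [pow_zero]
    exact Matrix.one_apply_ne (fun hc => by rw [hc] at hij; omega)
  | succ k ih =>
    intro i j hij
    rw [pow_succ, Matrix.mul_apply]
    refine Finset.sum_eq_zero fun r _ => ?_
    rcases le_or_gt (r:ℕ) (j:ℕ) with hr | hr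
    · rw [hL r j hr, mul_zero]
    · rw [ih i r (by omega), zero_mul]

lemma Pmat_isUnit {n l : ℕ} (h : K[X]) (hh : h.Monic) (hhn : h.natDegree = n) :
    IsUnit (Pmat n l h) := by
  have hco_n : h.coeff n = 1 := by rw [← hhn]; exact hh.coeff_natDegree
  have hdiag : ∀ i : Fin (n+l), Pmat n l h i i = 1 := by
    intro i
    unfold Pmat
    rcases lt_or_ge (i:ℕ) n with hi | hi
    · simp [hi]
    · rw [if_neg (by omega), if_pos (by omega),
        show (i:ℕ) - ((i:ℕ) - n) = n by omega, hco_n]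
  have hlow : ∀ i j : Fin (n+l), (i:ℕ) < (j:ℕ) → Pmat n l h i j = 0 := by
    intro i j hij
    unfold Pmat
    rcases lt_or_ge (i:ℕ) n with hi | hi
    · rw [if_pos hi, if_neg (by omega)]
    · rw [if_neg (by omega), if_pos (by omega)]
      exact coeff_eq_zero_of_natDegree_lt (by omega)
  have hdec : Pmat n l h = 1 + (Pmat n l h - 1) := by abel
  rw [hdec]
  refine IsNilpotent.isUnit_one_add ⟨n + l, ?_⟩
  ext i j
  show ((Pmat n l h - 1)^(n+l)) i j = (0 : Matrix _ _ K) i j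
  rw [Matrix.zero_apply]
  refine pow_strictLower _ (fun a b hab => ?_) (n+l) i j (by have := i.isLt; omega)
  rw [Matrix.sub_apply]
  rcases eq_or_lt_of_le hab with hab' | hab'
  · have hab2 : a = b := Fin.ext hab'
    subst hab2
    rw [hdiag a, Matrix.one_apply_eq, sub_self]
  · rw [hlow a b hab', Matrix.one_apply_ne (fun hc => by rw [hc] at hab'; omega), sub_zero]

lemma key_mul {l n : ℕ} (g h : K[X]) (hg : g.Monic) (hh : h.Monic)
    (hgl : g.natDegree = l) (hhn : h.natDegree = n) (hm : 0 < n + l) :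
    (Matrix.reindex finSumFinEquiv finSumFinEquiv
        (Matrix.fromBlocks (companionMatrix n h)
          (fun i j => if (i : ℕ) = n - 1 ∧ (j : ℕ) = 0 then 1 else 0)
          0 (companionMatrix l g))) * Pmat n l h
      = Pmat n l h * companionMatrix (n + l) (g * h) := by
  have hco_h_n : h.coeff n = 1 := by rw [← hhn]; exact hh.coeff_natDegree
  have hco_g_l : g.coeff l = 1 := by rw [← hgl]; exact hg.coeff_natDegree
  have hco_h : ∀ x : ℕ, n < x → h.coeff x = 0 :=
    fun x hx => coeff_eq_zero_of_natDegree_lt (by omega)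
  have hco_g : ∀ x : ℕ, l < x → g.coeff x = 0 :=
    fun x hx => coeff_eq_zero_of_natDegree_lt (by omega)
  have hfk : ∀ kk : ℕ, (g*h).coeff kk
      = ∑ j ∈ Finset.range (kk+1), g.coeff j * h.coeff (kk-j) := fun kk => by
    rw [coeff_mul, Finset.Nat.sum_antidiagonal_eq_sum_range_succ_mk]
  ext i k
  have hk2 := k.isLt
  obtain ⟨s, rfl⟩ := finSumFinEquiv.surjective i
  rw [Matrix.mul_apply, Matrix.mul_apply, mul_companion hm _ _ k]
  rcases s with a | b
  · -- top rows : i = castAdd l a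
    have ha2 := a.isLt
    have hProw : ∀ j : Fin (n+l),
        Pmat n l h (Fin.castAdd l a) j = if (a:ℕ) = (j:ℕ) then 1 else 0 := fun j => by
      unfold Pmat
      rw [if_pos (show ((Fin.castAdd l a : Fin (n+l)):ℕ) < n by simpa using ha2)]
      simp only [Fin.coe_castAdd]
    rw [finSumFinEquiv_apply_left, Fin.sum_univ_add]
    simp only [Matrix.reindex_apply, Matrix.submatrix_apply, finSumFinEquiv_symm_apply_castAdd,
      finSumFinEquiv_symm_apply_natAdd, Matrix.fromBlocks_apply₁₁, Matrix.fromBlocks_apply₁₂,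
      Matrix.fromBlocks, Matrix.of_apply, Sum.elim_inl, Sum.elim_inr,
      dite_eq_ite]
    have hS1 : (∑ a' : Fin n, companionMatrix n h a a' * Pmat n l h (Fin.castAdd l a') k)
        = if (k:ℕ) < n then
            (if (a:ℕ)+1 = (k:ℕ) then 1 else if (a:ℕ) = n-1 then -h.coeff (k:ℕ) else 0)
          else 0 := by
      by_cases hkn : (k:ℕ) < n
      · rw [if_pos hkn,
          sum_eq_of_ne (t := (k:ℕ)) hkn (fun j hj => by
            rw [show Pmat n l h (Fin.castAdd l j) k = if (j:ℕ) = (k:ℕ) then 1 else 0 from by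
                unfold Pmat
                rw [if_pos (show ((Fin.castAdd l j : Fin (n+l)):ℕ) < n by simpa using j.isLt)]
                simp only [Fin.coe_castAdd],
              if_neg hj, mul_zero])]
        rw [show Pmat n l h (Fin.castAdd l ⟨(k:ℕ), hkn⟩) k = 1 from by
            unfold Pmat
            rw [if_pos (show ((Fin.castAdd l (⟨(k:ℕ), hkn⟩ : Fin n) : Fin (n+l)):ℕ) < n
                by simpa using hkn)]
            simp [Fin.coe_castAdd],
          mul_one]
        rfl
      · rw [if_neg hkn]
        exact Finset.sum_eq_zero fun j _ => by
          rw [show Pmat n l h (Fin.castAdd l j) k = if (j:ℕ) = (k:ℕ) then 1 else 0 from by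
              unfold Pmat
              rw [if_pos (show ((Fin.castAdd l j : Fin (n+l)):ℕ) < n by simpa using j.isLt)]
              simp only [Fin.coe_castAdd],
            if_neg (by have := j.isLt; omega), mul_zero]
    have hS2 : (∑ b : Fin l, (if (a:ℕ) = n-1 ∧ (b:ℕ) = 0 then 1 else 0)
          * Pmat n l h (Fin.natAdd n b) k)
        = if (a:ℕ) = n-1 then (if 0 < l then h.coeff (k:ℕ) else 0) else 0 := by
      by_cases ha : (a:ℕ) = n-1
      · rw [if_pos ha]
        rcases Nat.eq_zero_or_pos l with hl | hl
        · rw [if_neg (by omega)]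
          exact Finset.sum_eq_zero fun b _ => absurd b.isLt (by omega)
        · rw [if_pos hl,
            sum_eq_of_ne (t := 0) hl (fun j hj => by
              rw [if_neg (fun hc => hj hc.2), zero_mul])]
          rw [if_pos ⟨ha, rfl⟩, one_mul]
          unfold Pmat
          rw [if_neg (by simp), if_pos (by simp)]
          congr 1
          simp
      · rw [if_neg ha]
        exact Finset.sum_eq_zero fun b _ => by rw [if_neg (fun hc => ha hc.1), zero_mul]
    rw [hS1, hS2, hProw, hProw]
    simp only [finValMk]
    -- now pure ℕ-indexed case analysis
    rcases Nat.eq_zero_or_pos l with hl | hl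
    · -- l = 0, g = 1
      have hg1 : g = 1 := hg.natDegree_eq_zero.mp (by omega)
      rw [hg1, one_mul]
      have hkn : (k:ℕ) < n := by omega
      rw [if_pos (show (k:ℕ) < n from hkn)]
      by_cases ha : (a:ℕ) = n-1
      · rw [if_neg (show ¬((a:ℕ)+1 = (k:ℕ)) by omega),
          if_pos (show (a:ℕ) = n-1 from ha), if_pos (show (a:ℕ) = n-1 from ha),
          if_neg (show ¬(0 < l) by omega), add_zero,
          if_pos (show (a:ℕ) = n+l-1 by omega), one_mul]
        by_cases hk1 : 1 ≤ (k:ℕ)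
        · rw [if_pos (show 1 ≤ (k:ℕ) from hk1),
            if_neg (show ¬((a:ℕ) = (k:ℕ)-1) by omega), zero_sub]
        · rw [if_neg (show ¬(1 ≤ (k:ℕ)) from hk1), zero_sub]
      · rw [if_neg (show ¬((a:ℕ) = n-1) from ha), if_neg (show ¬((a:ℕ) = n-1) from ha),
          add_zero, if_neg (show ¬((a:ℕ) = n+l-1) by omega), zero_mul, sub_zero]
        by_cases hak : (a:ℕ)+1 = (k:ℕ)
        · rw [if_pos (show (a:ℕ)+1 = (k:ℕ) from hak),
            if_pos (show 1 ≤ (k:ℕ) by omega), if_pos (show (a:ℕ) = (k:ℕ)-1 by omega)]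
        · rw [if_neg (show ¬((a:ℕ)+1 = (k:ℕ)) from hak)]
          by_cases hk1 : 1 ≤ (k:ℕ)
          · rw [if_pos (show 1 ≤ (k:ℕ) from hk1),
              if_neg (show ¬((a:ℕ) = (k:ℕ)-1) by omega)]
          · rw [if_neg (show ¬(1 ≤ (k:ℕ)) from hk1)]
    · -- l > 0
      rw [if_neg (show ¬((a:ℕ) = n+l-1) by omega), zero_mul, sub_zero,
        if_pos (show 0 < l from hl)]
      by_cases hkn : (k:ℕ) < n
      · rw [if_pos (show (k:ℕ) < n from hkn)]
        by_cases ha : (a:ℕ) = n-1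
        · rw [if_neg (show ¬((a:ℕ)+1 = (k:ℕ)) by omega),
            if_pos (show (a:ℕ) = n-1 from ha), if_pos (show (a:ℕ) = n-1 from ha),
            neg_add_cancel]
          by_cases hk1 : 1 ≤ (k:ℕ)
          · rw [if_pos (show 1 ≤ (k:ℕ) from hk1),
              if_neg (show ¬((a:ℕ) = (k:ℕ)-1) by omega)]
          · rw [if_neg (show ¬(1 ≤ (k:ℕ)) from hk1)]
        · rw [if_neg (show ¬((a:ℕ) = n-1) from ha), if_neg (show ¬((a:ℕ) = n-1) from ha),
            add_zero]
          by_cases hak : (a:ℕ)+1 = (k:ℕ)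
          · rw [if_pos (show (a:ℕ)+1 = (k:ℕ) from hak),
              if_pos (show 1 ≤ (k:ℕ) by omega), if_pos (show (a:ℕ) = (k:ℕ)-1 by omega)]
          · rw [if_neg (show ¬((a:ℕ)+1 = (k:ℕ)) from hak)]
            by_cases hk1 : 1 ≤ (k:ℕ)
            · rw [if_pos (show 1 ≤ (k:ℕ) from hk1),
                if_neg (show ¬((a:ℕ) = (k:ℕ)-1) by omega)]
            · rw [if_neg (show ¬(1 ≤ (k:ℕ)) from hk1)]
      · rw [if_neg (show ¬((k:ℕ) < n) from hkn), zero_add]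
        by_cases ha : (a:ℕ) = n-1
        · rw [if_pos (show (a:ℕ) = n-1 from ha)]
          by_cases hkk : (k:ℕ) = n
          · rw [show h.coeff (k:ℕ) = 1 from by rw [hkk, hco_h_n],
              if_pos (show 1 ≤ (k:ℕ) by omega), if_pos (show (a:ℕ) = (k:ℕ)-1 by omega)]
          · rw [hco_h _ (by omega)]
            by_cases hk1 : 1 ≤ (k:ℕ)
            · rw [if_pos (show 1 ≤ (k:ℕ) from hk1),
                if_neg (show ¬((a:ℕ) = (k:ℕ)-1) by omega)]
            · rw [if_neg (show ¬(1 ≤ (k:ℕ)) from hk1)]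
        · rw [if_neg (show ¬((a:ℕ) = n-1) from ha)]
          by_cases hk1 : 1 ≤ (k:ℕ)
          · rw [if_pos (show 1 ≤ (k:ℕ) from hk1),
              if_neg (show ¬((a:ℕ) = (k:ℕ)-1) by omega)]
          · rw [if_neg (show ¬(1 ≤ (k:ℕ)) from hk1)]
  · -- bottom rows : i = natAdd n b
    have hb2 := b.isLt
    have hProwb : ∀ (b' : Fin l) (j : Fin (n+l)),
        Pmat n l h (Fin.natAdd n b') j
          = if (b':ℕ) ≤ (j:ℕ) then h.coeff ((j:ℕ) - (b':ℕ)) else 0 := fun b' j => by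
      unfold Pmat
      rw [if_neg (by simp)]
      simp only [Fin.coe_natAdd, Nat.add_sub_cancel_left]
    rw [finSumFinEquiv_apply_right, Fin.sum_univ_add]
    simp only [Matrix.reindex_apply, Matrix.submatrix_apply, finSumFinEquiv_symm_apply_castAdd,
      finSumFinEquiv_symm_apply_natAdd, Matrix.fromBlocks_apply₂₁, Matrix.fromBlocks_apply₂₂,
      Matrix.fromBlocks, Matrix.of_apply, Sum.elim_inl, Sum.elim_inr,
      Matrix.zero_apply, zero_mul, Finset.sum_const_zero, zero_add, dite_eq_ite]
    rw [companion_mul (w := fun b' => Pmat n l h (Fin.natAdd n b') k)]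
    simp only [hProwb, finValMk]
    by_cases hb : (b:ℕ) = l-1
    · rw [dif_neg (show ¬((b:ℕ)+1 < l) by omega), if_pos (show (b:ℕ) = l-1 from hb),
        zero_add, if_pos (show (b:ℕ) ≤ n+l-1 by omega),
        show n+l-1-(b:ℕ) = n by omega, hco_h_n, one_mul]
      have hRHS : (if 1 ≤ (k:ℕ) then
            (if (b:ℕ) ≤ (k:ℕ)-1 then h.coeff ((k:ℕ)-1-(b:ℕ)) else 0) else 0)
          = if l ≤ (k:ℕ) then h.coeff ((k:ℕ)-l) else 0 := by
        by_cases hlk : l ≤ (k:ℕ)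
        · rw [if_pos (show l ≤ (k:ℕ) from hlk), if_pos (show 1 ≤ (k:ℕ) by omega),
            if_pos (show (b:ℕ) ≤ (k:ℕ)-1 by omega),
            show (k:ℕ)-1-(b:ℕ) = (k:ℕ)-l by omega]
        · rw [if_neg (show ¬(l ≤ (k:ℕ)) from hlk)]
          by_cases hk1 : 1 ≤ (k:ℕ)
          · rw [if_pos (show 1 ≤ (k:ℕ) from hk1), if_neg (show ¬((b:ℕ) ≤ (k:ℕ)-1) by omega)]
          · rw [if_neg (show ¬(1 ≤ (k:ℕ)) from hk1)]
      rw [hRHS]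
      have hmain : (∑ j : Fin l, g.coeff (j:ℕ)
            * (if (j:ℕ) ≤ (k:ℕ) then h.coeff ((k:ℕ)-(j:ℕ)) else 0))
            + (if l ≤ (k:ℕ) then h.coeff ((k:ℕ)-l) else 0) = (g*h).coeff (k:ℕ) := by
        rw [Fin.sum_univ_eq_sum_range
            (fun j => g.coeff j * (if j ≤ (k:ℕ) then h.coeff ((k:ℕ)-j) else 0)) l,
          hfk (k:ℕ)]
        by_cases hlk : l ≤ (k:ℕ)
        · rw [if_pos (show l ≤ (k:ℕ) from hlk), Finset.range_eq_Ico, Finset.range_eq_Ico,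
            ← Finset.sum_Ico_consecutive _ (Nat.zero_le l) (show l ≤ (k:ℕ)+1 by omega)]
          congr 1
          · exact Finset.sum_congr rfl (fun j hj => by
              rw [if_pos (by have := (Finset.mem_Ico.mp hj).2; omega)])
          · rw [Finset.sum_eq_single_of_mem l
              (Finset.mem_Ico.mpr ⟨le_refl l, by omega⟩)
              (fun j hj hne => by
                rw [hco_g j (by have := (Finset.mem_Ico.mp hj).1; omega), zero_mul]),
              hco_g_l, one_mul]
        · rw [if_neg (show ¬(l ≤ (k:ℕ)) from hlk), add_zero,
            ← Finset.sum_subset (Finset.range_subset_range.mpr (show (k:ℕ)+1 ≤ l by omega))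
              (fun j hj hnj => by
                simp only [Finset.mem_range] at hj hnj
                rw [if_neg (by omega), mul_zero])]
          exact Finset.sum_congr rfl (fun j hj => by
            rw [if_pos (by have := Finset.mem_range.mp hj; omega)])
      rw [← hmain]
      simp only [neg_mul, Finset.sum_neg_distrib]
      abel
    · have hb1 : (b:ℕ)+1 < l := by omega
      rw [dif_pos hb1, if_neg (show ¬((b:ℕ) = l-1) from hb), add_zero,
        if_pos (show (b:ℕ) ≤ n+l-1 by omega),
        show h.coeff (n+l-1-(b:ℕ)) = 0 from hco_h _ (by omega), zero_mul, sub_zero]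
      by_cases hbk : (b:ℕ)+1 ≤ (k:ℕ)
      · rw [if_pos (show (b:ℕ)+1 ≤ (k:ℕ) from hbk), if_pos (show 1 ≤ (k:ℕ) by omega),
          if_pos (show (b:ℕ) ≤ (k:ℕ)-1 by omega),
          show (k:ℕ)-((b:ℕ)+1) = (k:ℕ)-1-(b:ℕ) by omega]
      · rw [if_neg (show ¬((b:ℕ)+1 ≤ (k:ℕ)) from hbk)]
        by_cases hk1 : 1 ≤ (k:ℕ)
        · rw [if_pos (show 1 ≤ (k:ℕ) from hk1), if_neg (show ¬((b:ℕ) ≤ (k:ℕ)-1) by omega)]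
        · rw [if_neg (show ¬(1 ≤ (k:ℕ)) from hk1)]

end Helpers


set_option maxHeartbeats 1000000 in
theorem stmt_8 {K : Type*} [DivisionRing K] {l n : ℕ} (g h : K[X])
    (hg : g.Monic) (hh : h.Monic) (hgl : g.natDegree = l) (hhn : h.natDegree = n) :
    ∃ P : (Matrix (Fin (n + l)) (Fin (n + l)) K)ˣ,
      Matrix.reindex finSumFinEquiv finSumFinEquiv
          (Matrix.fromBlocks (companionMatrix n h)
            (fun i j => if (i : ℕ) = n - 1 ∧ (j : ℕ) = 0 then 1 else 0)
            0 (companionMatrix l g)) =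
        P.val * companionMatrix (n + l) (g * h) * P.inv := by
  rcases Nat.eq_zero_or_pos (n + l) with hm | hm
  · refine ⟨1, ?_⟩
    ext i k
    exact absurd i.isLt (by omega)
  · have hu := Pmat_isUnit (l := l) h hh hhn
    refine ⟨hu.unit, ?_⟩
    have hP := hu.unit_spec
    have hkey := key_mul g h hg hh hgl hhn hm
    rw [← hP] at hkey
    have h1 : hu.unit.val * hu.unit.inv = 1 := hu.unit.val_inv
    rw [← hkey, mul_assoc, h1, mul_one]
end

section
/- Let $K$ be a division ring, and let $g, h \in K[t]$ be monic of degrees $l$ and $n$. Set $A = \begin{pmatrix} C_h & U \\ 0 & C_g \end{pmatrix}$ and $B = \begin{pmatrix} C_h & 0 \\ 0 & C_g \end{pmatrix}$ where $U = e_{n1} \in M_{n\times l}(K)$ is the matrix unit with $1$ in position $(n,1)$. Then $1 \in K[t]g + hK[t]$ if and only if there exists $X \in M_{n \times l}(K)$ with $C_h X - X C_g = U$. -/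
open Polynomial

namespace Metro

variable {K : Type*} [DivisionRing K]

noncomputable def toP {m : ℕ} (v : Fin m → K) : K[X] :=
  ∑ j : Fin m, C (v j) * X ^ (j : ℕ)

lemma toP_coeff {m : ℕ} (v : Fin m → K) (j : ℕ) :
    (toP v).coeff j = if hj : j < m then v ⟨j, hj⟩ else 0 := by
  unfold toP
  rw [finset_sum_coeff]
  simp only [coeff_C_mul, coeff_X_pow, mul_ite, mul_one, mul_zero]
  split
  · next hj =>
    rw [Finset.sum_eq_single ⟨j, hj⟩]
    · simp
    · intro b _ hb
      simp only [ite_eq_right_iff]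
      intro hbj
      exact absurd (Fin.ext hbj.symm) hb
    · simp
  · next hj =>
    apply Finset.sum_eq_zero
    intro b _
    simp only [ite_eq_right_iff]
    intro hbj
    exact absurd (hbj ▸ b.isLt) hj

lemma toP_inj {m : ℕ} {v w : Fin m → K} (hvw : toP v = toP w) : v = w := by
  funext j
  have := congrArg (fun p => Polynomial.coeff p (j : ℕ)) hvw
  simpa [toP_coeff, j.isLt] using this

lemma degree_toP_lt {m : ℕ} (v : Fin m → K) : (toP v).degree < (m : WithBot ℕ) := by
  rw [degree_lt_iff_coeff_zero]
  intro k hk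
  have hk' : m ≤ k := by exact_mod_cast hk
  rw [toP_coeff]
  simp [Nat.not_lt.mpr hk']

lemma toP_of_coeff {m : ℕ} (p : K[X]) (hp : p.degree < (m : WithBot ℕ)) :
    toP (fun j : Fin m => p.coeff (j : ℕ)) = p := by
  ext k
  rw [toP_coeff]
  split
  · rfl
  · next hk =>
    symm
    exact coeff_eq_zero_of_degree_lt (lt_of_lt_of_le hp (by exact_mod_cast Nat.not_lt.mp hk))

lemma sum_C_coeff {m : ℕ} (f : K[X]) (hf : f.Monic) (hm : f.natDegree = m) :
    ∑ k : Fin m, C (f.coeff (k : ℕ)) * X ^ (k : ℕ) = f - X ^ m := by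
  ext j
  rw [finset_sum_coeff]
  simp only [coeff_C_mul, coeff_X_pow, mul_ite, mul_one, mul_zero, coeff_sub]
  by_cases hj : j < m
  · rw [Finset.sum_eq_single ⟨j, hj⟩]
    · simp [Nat.ne_of_lt hj]
    · intro b _ hb
      simp only [ite_eq_right_iff]
      intro hbj
      exact absurd (Fin.ext hbj.symm) hb
    · simp
  · rw [Finset.sum_eq_zero]
    · by_cases hjm : j = m
      · subst hjm
        have : f.coeff j = 1 := by rw [← hm]; exact hf.coeff_natDegree
        simp [this]
      · have : f.coeff j = 0 := by
          apply coeff_eq_zero_of_natDegree_lt; omega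
        simp [this, hjm]
    · intro b _
      simp only [ite_eq_right_iff]
      intro hbj
      have := b.isLt
      omega

lemma toP_vecMul {m l : ℕ} (v : Fin m → K) (M : Matrix (Fin m) (Fin l) K) :
    toP (fun j => ∑ k, v k * M k j) = ∑ k, C (v k) * toP (M k) := by
  unfold toP
  simp only [map_sum, Finset.sum_mul, Finset.mul_sum, map_mul, mul_assoc]
  rw [Finset.sum_comm]

lemma toP_companion_row_ne {m : ℕ} (f : K[X]) (k : Fin m) (hk : (k : ℕ) ≠ m - 1) :
    toP (companionMatrix m f k) = X ^ ((k : ℕ) + 1) := by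
  have hk1 : (k : ℕ) + 1 < m := by have := k.isLt; omega
  unfold toP companionMatrix
  rw [Finset.sum_eq_single ⟨(k : ℕ) + 1, hk1⟩]
  · simp
  · intro b _ hb
    have : ¬ ((k : ℕ) + 1 = (b : ℕ)) := fun hc => hb (Fin.ext hc.symm)
    simp [this, hk]
  · simp

lemma toP_companion_row_last {m : ℕ} (f : K[X]) (hf : f.Monic) (hm : f.natDegree = m)
    (k : Fin m) (hk : (k : ℕ) = m - 1) :
    toP (companionMatrix m f k) = X ^ m - f := by
  have hm0 : 0 < m := k.pos
  have hk1 : ∀ b : Fin m, ¬ ((k : ℕ) + 1 = (b : ℕ)) := by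
    intro b hc
    have := b.isLt
    omega
  unfold toP companionMatrix
  have : ∀ b : Fin m,
      C (if (k : ℕ) + 1 = (b : ℕ) then 1 else if (k : ℕ) = m - 1 then -f.coeff (b : ℕ) else 0)
        * X ^ (b : ℕ) = -(C (f.coeff (b : ℕ)) * X ^ (b : ℕ)) := by
    intro b
    rw [if_neg (hk1 b), if_pos hk, map_neg, neg_mul]
  rw [Finset.sum_congr rfl (fun b _ => this b), Finset.sum_neg_distrib,
    sum_C_coeff f hf hm, neg_sub]

lemma exists_right_div (g : K[X]) (hg : g.Monic) (y : K[X]) :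
    ∃ q r : K[X], y = q * g + r ∧ r.degree < g.degree := by
  by_cases hy0 : y = 0
  · exact ⟨0, 0, by simp [hy0], by rw [degree_zero]; exact bot_lt_iff_ne_bot.mpr (fun hb => hg.ne_zero (degree_eq_bot.mp hb))⟩
  generalize hd : y.natDegree = d
  induction d using Nat.strong_induction_on generalizing y with
  | _ d ih =>
    by_cases hlt : y.degree < g.degree
    · exact ⟨0, y, by simp, hlt⟩
    · have hle : g.degree ≤ y.degree := not_lt.mp hlt
      have hnle : g.natDegree ≤ y.natDegree := natDegree_le_natDegree hle
      set c := y.leadingCoeff with hc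
      have hc0 : c ≠ 0 := leadingCoeff_ne_zero.mpr hy0
      set e := y.natDegree - g.natDegree with he
      set y' := y - C c * X ^ e * g with hy'
      have hlead : (C c * X ^ e).leadingCoeff = c := by
        simp [leadingCoeff_C_mul_X_pow]
      have hdeg : (C c * X ^ e * g).degree = y.degree := by
        rw [degree_mul' (by rw [hlead, hg.leadingCoeff, mul_one]; exact hc0)]
        rw [degree_C_mul_X_pow e hc0, degree_eq_natDegree hy0,
          degree_eq_natDegree hg.ne_zero]
        rw [← Nat.cast_add]
        congr 1
        omega
      have hleadeq : (C c * X ^ e * g).leadingCoeff = y.leadingCoeff := by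
        rw [leadingCoeff_mul' (by rw [hlead, hg.leadingCoeff, mul_one]; exact hc0),
          hlead, hg.leadingCoeff, mul_one]
      have hy'deg : y'.degree < y.degree := by
        rw [hy']
        rw [← neg_sub, degree_neg, ← hdeg]
        exact degree_sub_lt hdeg (by
          intro hz
          rw [hz] at hleadeq
          exact hc0 (by rw [hc]; simpa using hleadeq.symm)) hleadeq
      by_cases hy'0 : y' = 0
      · refine ⟨C c * X ^ e, 0, ?_, by rw [degree_zero]; exact bot_lt_iff_ne_bot.mpr (fun hb => hg.ne_zero (degree_eq_bot.mp hb))⟩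
        have : y - C c * X ^ e * g = 0 := hy'0
        rw [sub_eq_zero] at this
        simp [this]
      · have hy'nd : y'.natDegree < d := by
          rw [← hd]
          exact natDegree_lt_natDegree hy'0 hy'deg
        obtain ⟨q, r, hqr, hr⟩ := ih y'.natDegree hy'nd y' hy'0 rfl
        refine ⟨C c * X ^ e + q, r, ?_, hr⟩
        rw [add_mul, add_assoc, ← hqr, hy', add_comm, sub_add_cancel]

lemma toP_sub {m : ℕ} (v w : Fin m → K) : toP (v - w) = toP v - toP w := by
  unfold toP
  rw [← Finset.sum_sub_distrib]
  refine Finset.sum_congr rfl fun j _ => ?_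
  simp [sub_mul]

lemma toP_U {n l : ℕ} (hl : 0 < l) (i : Fin n) :
    toP (fun j : Fin l => if (i : ℕ) = n - 1 ∧ (j : ℕ) = 0 then (1 : K) else 0)
      = if (i : ℕ) = n - 1 then 1 else 0 := by
  by_cases hi : (i : ℕ) = n - 1
  · rw [if_pos hi]
    unfold toP
    rw [Finset.sum_eq_single (⟨0, hl⟩ : Fin l)]
    · simp [hi]
    · intro b _ hb
      have : ¬ ((b : ℕ) = 0) := fun hc => hb (Fin.ext hc)
      simp [this]
    · simp
  · simp [toP, hi]

lemma row_mul_companion {n l : ℕ} (hl : 0 < l) (g : K[X]) (hg : g.Monic)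
    (hgl : g.natDegree = l) (Xm : Matrix (Fin n) (Fin l) K) (i : Fin n) :
    toP ((Xm * companionMatrix l g) i) =
      X * toP (Xm i) - C (Xm i ⟨l - 1, by omega⟩) * g := by
  have h1 : toP ((Xm * companionMatrix l g) i)
      = ∑ k, C (Xm i k) * toP (companionMatrix l g k) := by
    have he : ((Xm * companionMatrix l g) i : Fin l → K)
        = fun j => ∑ k, Xm i k * companionMatrix l g k j := by
      funext j; exact Matrix.mul_apply
    rw [he, toP_vecMul]
  rw [h1]
  have h2 : ∀ k : Fin l, toP (companionMatrix l g k)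
      = X ^ ((k : ℕ) + 1) - (if (k : ℕ) = l - 1 then g else 0) := by
    intro k
    by_cases hk : (k : ℕ) = l - 1
    · rw [toP_companion_row_last g hg hgl k hk, if_pos hk]
      congr 2
      omega
    · rw [toP_companion_row_ne g k hk, if_neg hk, sub_zero]
  calc ∑ k, C (Xm i k) * toP (companionMatrix l g k)
      = ∑ k : Fin l, (C (Xm i k) * X ^ ((k : ℕ) + 1)
          - C (Xm i k) * (if (k : ℕ) = l - 1 then g else 0)) := by
        refine Finset.sum_congr rfl fun k _ => ?_
        rw [h2 k, mul_sub]
    _ = (∑ k : Fin l, C (Xm i k) * X ^ ((k : ℕ) + 1))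
          - ∑ k : Fin l, C (Xm i k) * (if (k : ℕ) = l - 1 then g else 0) :=
        Finset.sum_sub_distrib _ _
    _ = X * toP (Xm i) - C (Xm i ⟨l - 1, by omega⟩) * g := by
        congr 1
        · unfold toP
          rw [Finset.mul_sum]
          refine Finset.sum_congr rfl fun k _ => ?_
          rw [pow_succ', ← mul_assoc, ← X_mul, mul_assoc]
        · rw [Finset.sum_eq_single (⟨l - 1, by omega⟩ : Fin l)]
          · simp
          · intro b _ hb
            rw [if_neg, mul_zero]
            intro hc; exact hb (Fin.ext hc)
          · simp

lemma toP_companion_mul {n l : ℕ} (h : K[X]) (Xm : Matrix (Fin n) (Fin l) K) (i : Fin n) :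
    toP ((companionMatrix n h * Xm) i)
      = ∑ k, C (companionMatrix n h i k) * toP (Xm k) := by
  have he : ((companionMatrix n h * Xm) i : Fin l → K)
      = fun j => ∑ k, companionMatrix n h i k * Xm k j := by
    funext j; exact Matrix.mul_apply
  rw [he, toP_vecMul]

lemma companion_mul_row_ne {n l : ℕ} (h : K[X]) (Xm : Matrix (Fin n) (Fin l) K)
    (i : Fin n) (hi : (i : ℕ) ≠ n - 1) :
    toP ((companionMatrix n h * Xm) i)
      = toP (Xm ⟨(i : ℕ) + 1, by have := i.isLt; omega⟩) := by
  rw [toP_companion_mul]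
  rw [Finset.sum_eq_single (⟨(i : ℕ) + 1, by have := i.isLt; omega⟩ : Fin n)]
  · simp [companionMatrix]
  · intro b _ hb
    have hbne : ¬ ((i : ℕ) + 1 = (b : ℕ)) := fun hc => hb (Fin.ext hc.symm)
    simp [companionMatrix, hbne, hi]
  · simp

lemma companion_mul_row_last {n l : ℕ} (h : K[X]) (Xm : Matrix (Fin n) (Fin l) K)
    (i : Fin n) (hi : (i : ℕ) = n - 1) :
    toP ((companionMatrix n h * Xm) i)
      = -∑ k : Fin n, C (h.coeff (k : ℕ)) * toP (Xm k) := by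
  rw [toP_companion_mul, ← Finset.sum_neg_distrib]
  refine Finset.sum_congr rfl fun k _ => ?_
  have hc : companionMatrix n h i k = -h.coeff (k : ℕ) := by
    unfold companionMatrix
    rw [if_neg (by have := k.isLt; omega), if_pos hi]
  rw [hc, map_neg, neg_mul]

noncomputable def pseq (g : K[X]) (l : ℕ) (r0 : K[X]) : ℕ → K[X]
  | 0 => r0
  | i + 1 => X * pseq g l r0 i - C ((pseq g l r0 i).coeff (l - 1)) * g

@[simp] lemma pseq_zero (g : K[X]) (l : ℕ) (r0 : K[X]) : pseq g l r0 0 = r0 := rfl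

lemma pseq_succ (g : K[X]) (l : ℕ) (r0 : K[X]) (i : ℕ) :
    pseq g l r0 (i + 1) = X * pseq g l r0 i - C ((pseq g l r0 i).coeff (l - 1)) * g := rfl

lemma pseq_deg {l : ℕ} (hl : 0 < l) (g : K[X]) (hg : g.Monic) (hgl : g.natDegree = l)
    (r0 : K[X]) (hr0 : r0.degree < (l : WithBot ℕ)) :
    ∀ i, (pseq g l r0 i).degree < (l : WithBot ℕ) := by
  intro i
  induction i with
  | zero => exact hr0
  | succ i ih =>
    rw [degree_lt_iff_coeff_zero]
    intro m hm
    have hm' : l ≤ m := by exact_mod_cast hm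
    rw [pseq_succ]
    obtain ⟨m', rfl⟩ : ∃ m', m = m' + 1 := ⟨m - 1, by omega⟩
    rw [coeff_sub, coeff_X_mul, coeff_C_mul]
    by_cases hml : m' + 1 = l
    · have h1 : (pseq g l r0 i).coeff m' = (pseq g l r0 i).coeff (l - 1) := by
        congr 1; omega
      have h2 : g.coeff (m' + 1) = 1 := by
        rw [hml, ← hgl]; exact hg.coeff_natDegree
      rw [h1, h2, mul_one, sub_self]
    · have h1 : (pseq g l r0 i).coeff m' = 0 := by
        apply coeff_eq_zero_of_degree_lt
        exact lt_of_lt_of_le ih (by exact_mod_cast (by omega : l ≤ m'))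
      have h2 : g.coeff (m' + 1) = 0 := by
        apply coeff_eq_zero_of_natDegree_lt; omega
      rw [h1, h2, mul_zero, sub_self]

lemma pseq_sub (g : K[X]) (l : ℕ) (r0 : K[X]) :
    ∀ i, ∃ qq : K[X], X ^ i * r0 = pseq g l r0 i + qq * g := by
  intro i
  induction i with
  | zero => exact ⟨0, by simp [pseq]⟩
  | succ i ih =>
    obtain ⟨qq, hqq⟩ := ih
    refine ⟨X * qq + C ((pseq g l r0 i).coeff (l - 1)), ?_⟩
    rw [pseq_succ, pow_succ', mul_assoc, hqq]
    noncomm_ring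

lemma key {l n : ℕ} (g h : K[X]) (hh : h.Monic) (hhn : h.natDegree = n) (r0 : K[X]) :
    ∃ Q : K[X], (-∑ k : Fin n, C (h.coeff (k : ℕ)) * pseq g l r0 (k : ℕ)) - pseq g l r0 n
      = Q * g - h * r0 := by
  choose qq hqq using pseq_sub g l r0
  have hp : ∀ i, pseq g l r0 i = X ^ i * r0 - qq i * g := by
    intro i
    rw [hqq i, add_sub_cancel_right]
  refine ⟨(∑ k : Fin n, C (h.coeff (k : ℕ)) * qq (k : ℕ)) + qq n, ?_⟩
  have hsum : ∑ k : Fin n, C (h.coeff (k : ℕ)) * pseq g l r0 (k : ℕ)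
      = (h - X ^ n) * r0 - (∑ k : Fin n, C (h.coeff (k : ℕ)) * qq (k : ℕ)) * g := by
    rw [← sum_C_coeff h hh hhn, Finset.sum_mul, Finset.sum_mul, ← Finset.sum_sub_distrib]
    refine Finset.sum_congr rfl fun k _ => ?_
    rw [hp (k : ℕ), mul_sub, ← mul_assoc, ← mul_assoc]
  rw [hsum, hp n]
  noncomm_ring

lemma eq_one_of_deg {l : ℕ} (hl : 0 < l) (g : K[X]) (hg : g.Monic) (hgl : g.natDegree = l)
    (E D : K[X]) (hE : E.degree < (l : WithBot ℕ)) (heq : E = 1 + D * g) : E = 1 := by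
  by_cases hD : D = 0
  · simp [heq, hD]
  · exfalso
    have h1 : (D * g).degree < (l : WithBot ℕ) := by
      have hDg : D * g = E - 1 := by rw [heq]; abel
      rw [hDg]
      refine lt_of_le_of_lt (degree_sub_le _ _) (max_lt hE ?_)
      rw [degree_one]
      exact_mod_cast hl
    have hDg0 : D * g ≠ 0 := mul_ne_zero hD hg.ne_zero
    have h2 : (D * g).natDegree = D.natDegree + l := by
      rw [natDegree_mul' (by rw [hg.leadingCoeff, mul_one]; exact leadingCoeff_ne_zero.mpr hD),
        hgl]
    have h3 := (natDegree_lt_iff_degree_lt hDg0).mpr h1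
    omega

end Metro


theorem stmt_9 {K : Type*} [DivisionRing K] {l n : ℕ} (g h : K[X])
    (hg : g.Monic) (hh : h.Monic) (hgl : g.natDegree = l) (hhn : h.natDegree = n) :
    (∃ x y : K[X], x * g + h * y = 1) ↔
      ∃ X : Matrix (Fin n) (Fin l) K,
        companionMatrix n h * X - X * companionMatrix l g =
          (fun i j => if (i : ℕ) = n - 1 ∧ (j : ℕ) = 0 then 1 else 0 :
            Matrix (Fin n) (Fin l) K) := by
  classical
  rcases Nat.eq_zero_or_pos l with hl | hl
  · have hg1 : g = 1 := hg.natDegree_eq_zero.mp (hgl.trans hl)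
    constructor
    · intro _
      refine ⟨0, ?_⟩
      funext i j
      exact absurd j.isLt (by omega)
    · intro _
      exact ⟨1, 0, by simp [hg1]⟩
  rcases Nat.eq_zero_or_pos n with hn | hn
  · have hh1 : h = 1 := hh.natDegree_eq_zero.mp (hhn.trans hn)
    constructor
    · intro _
      refine ⟨0, ?_⟩
      funext i j
      exact absurd i.isLt (by omega)
    · intro _
      exact ⟨0, 1, by simp [hh1]⟩
  constructor
  · rintro ⟨x, y, hxy⟩
    obtain ⟨q, r, hy, hr⟩ := Metro.exists_right_div g hg y
    have hrl : r.degree < (l : WithBot ℕ) := by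
      rw [← hgl, ← degree_eq_natDegree hg.ne_zero]
      exact hr
    have hx1 : (x + h * q) * g + h * r = 1 := by
      rw [← hxy, hy]; noncomm_ring
    set p := Metro.pseq g l (-r) with hpdef
    have hpdeg : ∀ i, (p i).degree < (l : WithBot ℕ) :=
      Metro.pseq_deg hl g hg hgl (-r) (by rwa [degree_neg])
    set Xm : Matrix (Fin n) (Fin l) K := fun i j => (p (i : ℕ)).coeff (j : ℕ) with hXm
    have hP : ∀ i : Fin n, Metro.toP (Xm i) = p (i : ℕ) := fun i =>
      Metro.toP_of_coeff _ (hpdeg _)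
    obtain ⟨Q, hQ⟩ := Metro.key g h hh hhn (-r)
    have hCmul : ∀ (a : K) (pp : K[X]), (C a * pp).degree ≤ pp.degree := fun a pp =>
      le_trans (degree_mul_le _ _)
        (by simpa using add_le_add degree_C_le (le_refl pp.degree))
    have hE : (-∑ k : Fin n, C (h.coeff (k : ℕ)) * p (k : ℕ)) - p n = 1 := by
      have hdegE : ((-∑ k : Fin n, C (h.coeff (k : ℕ)) * p (k : ℕ)) - p n).degree
          < (l : WithBot ℕ) := by
        refine lt_of_le_of_lt (degree_sub_le _ _) (max_lt ?_ (hpdeg n))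
        rw [degree_neg]
        refine lt_of_le_of_lt (degree_sum_le _ _) ?_
        refine (Finset.sup_lt_iff (by exact_mod_cast WithBot.bot_lt_coe l)).mpr ?_
        intro k _
        exact lt_of_le_of_lt (hCmul _ _) (hpdeg _)
      refine Metro.eq_one_of_deg hl g hg hgl _ (Q - (x + h * q)) hdegE ?_
      rw [hQ, ← hx1]
      noncomm_ring
    refine ⟨Xm, ?_⟩
    funext i
    apply Metro.toP_inj
    have hsub : (companionMatrix n h * Xm - Xm * companionMatrix l g) i
        = ((companionMatrix n h * Xm) i - (Xm * companionMatrix l g) i : Fin l → K) := rfl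
    rw [hsub, Metro.toP_sub, Metro.row_mul_companion hl g hg hgl, Metro.toP_U hl i]
    have hcoe : Xm i ⟨l - 1, by omega⟩ = (p (i : ℕ)).coeff (l - 1) := rfl
    by_cases hi : (i : ℕ) = n - 1
    · rw [Metro.companion_mul_row_last h Xm i hi, if_pos hi]
      have h2 : X * Metro.toP (Xm i) - C (Xm i ⟨l - 1, by omega⟩) * g = p ((i : ℕ) + 1) := by
        rw [hP i, hcoe]
        exact (Metro.pseq_succ g l (-r) (i : ℕ)).symm
      rw [h2]
      have hin : (i : ℕ) + 1 = n := by have := i.isLt; omega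
      rw [hin]
      have hsc : ∑ k : Fin n, C (h.coeff (k : ℕ)) * Metro.toP (Xm k)
          = ∑ k : Fin n, C (h.coeff (k : ℕ)) * p (k : ℕ) :=
        Finset.sum_congr rfl fun k _ => by rw [hP k]
      rw [hsc]
      exact hE
    · rw [Metro.companion_mul_row_ne h Xm i hi, if_neg hi, hP, hP, hcoe, ← Metro.pseq_succ]
      exact sub_self _
  · rintro ⟨Xm, hX⟩
    set p := Metro.pseq g l (Metro.toP (Xm ⟨0, hn⟩)) with hpdef
    have hrow : ∀ i : Fin n,
        Metro.toP ((companionMatrix n h * Xm) i) - Metro.toP ((Xm * companionMatrix l g) i)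
          = if (i : ℕ) = n - 1 then 1 else 0 := by
      intro i
      rw [← Metro.toP_sub, ← Metro.toP_U hl i]
      congr 1
      exact congrFun hX i
    have hPi : ∀ (i : ℕ) (hi : i < n), p i = Metro.toP (Xm ⟨i, hi⟩) := by
      intro i
      induction i with
      | zero => intro hi; rfl
      | succ i ih =>
        intro hi
        have hi' : i < n := by omega
        have hine : ((⟨i, hi'⟩ : Fin n) : ℕ) ≠ n - 1 := by simp; omega
        have hr := hrow ⟨i, hi'⟩
        rw [Metro.companion_mul_row_ne h Xm ⟨i, hi'⟩ hine,
          Metro.row_mul_companion hl g hg hgl, if_neg hine, sub_eq_zero] at hr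
        rw [show p (i + 1) = X * p i - C ((p i).coeff (l - 1)) * g from
            Metro.pseq_succ g l _ i, ih hi', Metro.toP_coeff,
          dif_pos (show l - 1 < l by omega)]
        exact hr.symm
    have hPk : ∀ k : Fin n, Metro.toP (Xm k) = p (k : ℕ) := fun k =>
      (hPi (k : ℕ) k.isLt).symm
    have hlast := hrow ⟨n - 1, by omega⟩
    rw [Metro.companion_mul_row_last h Xm ⟨n - 1, by omega⟩ rfl,
      Metro.row_mul_companion hl g hg hgl, if_pos rfl] at hlast
    have hp1 : p (n - 1) = Metro.toP (Xm ⟨n - 1, by omega⟩) := hPi (n - 1) (by omega)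
    have h2 : X * Metro.toP (Xm ⟨n - 1, by omega⟩)
        - C (Xm ⟨n - 1, by omega⟩ ⟨l - 1, by omega⟩) * g = p ((n - 1) + 1) := by
      rw [show p ((n - 1) + 1) = X * p (n - 1) - C ((p (n - 1)).coeff (l - 1)) * g from
        Metro.pseq_succ g l _ (n - 1), hp1, Metro.toP_coeff,
        dif_pos (show l - 1 < l by omega)]
    have hsc : ∑ k : Fin n, C (h.coeff (k : ℕ)) * Metro.toP (Xm k)
        = ∑ k : Fin n, C (h.coeff (k : ℕ)) * p (k : ℕ) :=
      Finset.sum_congr rfl fun k _ => by rw [hPk k]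
    rw [h2, show (n - 1) + 1 = n by omega, hsc] at hlast
    obtain ⟨Q, hQ⟩ := Metro.key g h hh hhn (Metro.toP (Xm ⟨0, hn⟩))
    refine ⟨Q, -(Metro.toP (Xm ⟨0, hn⟩)), ?_⟩
    rw [mul_neg, ← sub_eq_add_neg, ← hQ]
    exact hlast
end

section
/- Let $K$ be a division ring, $R = K[t]$, and $g, h \in R$ monic. The short exact sequence of left $R$-modules $0 \to R/Rg \xrightarrow{\cdot h} R/Rgh \to R/Rh \to 0$ (where the first map is right multiplication by $h$) splits if and only if $1 \in Rg + hR$. -/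
open Polynomial

theorem stmt_10 {K : Type*} [DivisionRing K] (g h : K[X])
    (hg : g.Monic) (hh : h.Monic) :
    (∃ π : (K[X] ⧸ (Submodule.span K[X] {g * h} : Submodule K[X] K[X])) →ₗ[K[X]]
        (K[X] ⧸ (Submodule.span K[X] {g} : Submodule K[X] K[X])),
      ∀ x : K[X],
        π (Submodule.Quotient.mk (x * h)) = Submodule.Quotient.mk x) ↔
      ∃ p q : K[X], p * g + h * q = 1 := by
  constructor
  · rintro ⟨π, hπ⟩
    obtain ⟨u, hu⟩ := Submodule.Quotient.mk_surjective _
      (π (Submodule.Quotient.mk (1 : K[X])))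
    have h1 : π (Submodule.Quotient.mk (h : K[X])) = Submodule.Quotient.mk 1 := by
      simpa using hπ 1
    have h2 : π (Submodule.Quotient.mk (h : K[X])) = Submodule.Quotient.mk (h * u) := by
      have : (Submodule.Quotient.mk (h : K[X]) :
          K[X] ⧸ (Submodule.span K[X] {g * h} : Submodule K[X] K[X]))
          = h • Submodule.Quotient.mk (1 : K[X]) := by
        rw [← Submodule.Quotient.mk_smul]; simp [smul_eq_mul]
      rw [this, map_smul, ← hu, ← Submodule.Quotient.mk_smul]
      simp [smul_eq_mul]
    have h3 : h * u - 1 ∈ (Submodule.span K[X] {g} : Submodule K[X] K[X]) := by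
      rw [← Submodule.Quotient.eq]
      rw [← h2, h1]
    obtain ⟨a, ha⟩ := Submodule.mem_span_singleton.mp h3
    rw [smul_eq_mul] at ha
    exact ⟨-a, u, by rw [neg_mul, ha]; noncomm_ring⟩
  · rintro ⟨p, q, hpq⟩
    have key : ∀ x : K[X], h * q = 1 - p * g := fun _ => eq_sub_of_add_eq' hpq
    -- right multiplication by q as a left-linear map
    let rq : K[X] →ₗ[K[X]] K[X] :=
      { toFun := fun x => x * q
        map_add' := fun a b => add_mul a b q
        map_smul' := fun a b => by simp [smul_eq_mul, mul_assoc] }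
    let f : K[X] →ₗ[K[X]] (K[X] ⧸ (Submodule.span K[X] {g} : Submodule K[X] K[X])) :=
      (Submodule.mkQ _).comp rq
    have hker : (Submodule.span K[X] {g * h} : Submodule K[X] K[X]) ≤ LinearMap.ker f := by
      rw [Submodule.span_le, Set.singleton_subset_iff]
      show f (g * h) = 0
      have : g * h * q = g - g * p * g := by
        rw [mul_assoc, key 1, mul_sub, mul_one, ← mul_assoc]
      simp only [f, rq, LinearMap.comp_apply, LinearMap.coe_mk, AddHom.coe_mk,
        Submodule.mkQ_apply, Submodule.Quotient.mk_eq_zero]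
      rw [this]
      exact Submodule.sub_mem _ (Submodule.mem_span_singleton.mpr ⟨1, by simp⟩)
        (Submodule.mem_span_singleton.mpr ⟨g * p, by rw [smul_eq_mul]⟩)
    refine ⟨Submodule.liftQ _ f hker, fun x => ?_⟩
    rw [Submodule.liftQ_apply]
    show Submodule.Quotient.mk (x * h * q) = Submodule.Quotient.mk x
    rw [Submodule.Quotient.eq]
    have : x * h * q - x = -(x * p * g) := by
      rw [mul_assoc, key 1]; noncomm_ring
    rw [this]
    exact Submodule.neg_mem _ (Submodule.mem_span_singleton.mpr ⟨x * p, by rw [smul_eq_mul]⟩)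
end

section
/- Let $K$ be a division ring and $A \in M_n(K)$. If $v_1, \dots, v_m \in K^n$ are nonzero left eigenvectors of $A$ (i.e., $v_i A = \alpha_i v_i$) whose eigenvalues $\alpha_1, \dots, \alpha_m$ lie in pairwise distinct conjugacy classes of $K$, then $v_1, \dots, v_m$ are left linearly independent over $K$. -/
theorem stmt_13 {K : Type*} [DivisionRing K] {n m : ℕ} (A : Matrix (Fin n) (Fin n) K)
    (v : Fin m → Fin n → K) (α : Fin m → K)
    (hv : ∀ i, v i ≠ 0)
    (heig : ∀ i, Matrix.vecMul (v i) A = α i • v i)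
    (hdist : ∀ i j, i ≠ j → ∀ c : Kˣ, α j ≠ c * α i * (c : K)⁻¹) :
    LinearIndependent K v := by
  rw [Fintype.linearIndependent_iff]
  suffices H : ∀ s : Finset (Fin m), ∀ g : Fin m → K,
      (∑ j ∈ s, g j • v j = 0) → ∀ i ∈ s, g i = 0 by
    intro g hg i
    exact H Finset.univ g (by simpa using hg) i (Finset.mem_univ i)
  intro s
  induction s using Finset.strongInduction with
  | _ s IH =>
    intro g hg i hi
    by_contra hgi
    set c : K := g i with hc
    set h : Fin m → K := fun j => c⁻¹ * g j with hh
    have hh1 : h i = 1 := by simp only [hh]; exact inv_mul_cancel₀ hgi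
    have hhsum : ∑ j ∈ s, h j • v j = 0 := by
      have : ∑ j ∈ s, h j • v j = c⁻¹ • ∑ j ∈ s, g j • v j := by
        rw [Finset.smul_sum]
        exact Finset.sum_congr rfl fun j _ => by rw [smul_smul]
      rw [this, hg, smul_zero]
    -- multiply by A
    have sum1 : ∑ j ∈ s, (h j * α j) • v j = 0 := by
      have := congrArg (A.vecMulLinear) hhsum
      rw [map_sum, map_zero] at this
      rw [← this]
      refine Finset.sum_congr rfl fun j _ => ?_
      simp only [Matrix.vecMulLinear_apply]
      rw [Matrix.smul_vecMul, heig j, smul_smul]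
    have sum2 : ∑ j ∈ s, (α i * h j) • v j = 0 := by
      have : ∑ j ∈ s, (α i * h j) • v j = α i • ∑ j ∈ s, h j • v j := by
        rw [Finset.smul_sum]
        exact Finset.sum_congr rfl fun j _ => by rw [smul_smul]
      rw [this, hhsum, smul_zero]
    set g' : Fin m → K := fun j => h j * α j - α i * h j with hg'
    have sumg' : ∑ j ∈ s, g' j • v j = 0 := by
      have : ∀ j, g' j • v j = (h j * α j) • v j - (α i * h j) • v j := by
        intro j; rw [hg', sub_smul]
      simp_rw [this]
      rw [Finset.sum_sub_distrib, sum1, sum2, sub_zero]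
    have hg'i : g' i = 0 := by simp [hg', hh1]
    have sumer : ∑ j ∈ s.erase i, g' j • v j = 0 := by
      have h2 := Finset.add_sum_erase s (fun j => g' j • v j) hi
      simp only [hg'i, zero_smul, zero_add] at h2
      rw [h2, sumg']
    have hzero : ∀ j ∈ s.erase i, g' j = 0 :=
      IH (s.erase i) (Finset.erase_ssubset hi) g' sumer
    have hzeroh : ∀ j ∈ s, j ≠ i → h j = 0 := by
      intro j hj hne
      by_contra hhj
      have hz := hzero j (Finset.mem_erase.mpr ⟨hne, hj⟩)
      have heq : h j * α j = α i * h j := by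
        have := sub_eq_zero.mp hz
        exact this
      have : α i = (h j) * α j * (h j)⁻¹ := by
        rw [heq, mul_inv_cancel_right₀ hhj]
      exact hdist j i hne (Units.mk0 (h j) hhj) this
    have : ∑ j ∈ s, h j • v j = h i • v i := by
      refine Finset.sum_eq_single_of_mem i hi fun j hj hne => ?_
      rw [hzeroh j hj hne, zero_smul]
    rw [hhsum, hh1, one_smul] at this
    exact hv i this.symm
end

section
/- Let $K$ be a division ring, $A \in M_n(K)$, $\alpha \in K$ a left eigenvalue of $A$ with row eigenvector $v$ (so $vA = \alpha v$), and $\beta \in K$ a right eigenvalue with column eigenvector $u$ (so $Au = u\beta$). If $\alpha$ and $\beta$ are not conjugate in $K$, then $v \cdot u = \sum_i v_i u_i = 0$. -/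
theorem stmt_14 {K : Type*} [DivisionRing K] {n : ℕ} (A : Matrix (Fin n) (Fin n) K)
    (α β : K) (v u : Fin n → K) (hv : v ≠ 0) (hu : u ≠ 0)
    (hleft : Matrix.vecMul v A = α • v)
    (hright : A.mulVec u = fun i => u i * β)
    (hnotconj : ∀ c : K, c ≠ 0 → β ≠ c * α * c⁻¹) :
    ∑ i, v i * u i = 0 := by
  by_contra hs
  set s := ∑ i, v i * u i with hsdef
  have h1 : ∑ j, (Matrix.vecMul v A) j * u j = ∑ i, v i * (A.mulVec u) i := by
    simp only [Matrix.vecMul, Matrix.mulVec, dotProduct, Finset.sum_mul,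
      Finset.mul_sum, mul_assoc]
    exact Finset.sum_comm
  rw [hleft, hright] at h1
  simp only [Pi.smul_apply, smul_eq_mul, mul_assoc, ← Finset.mul_sum] at h1
  have h2 : α * s = s * β := by
    rw [h1, hsdef, Finset.sum_mul]
    simp [mul_assoc]
  have hβ : β = s⁻¹ * α * s := by
    rw [mul_assoc, h2, ← mul_assoc, inv_mul_cancel₀ hs, one_mul]
  have := hnotconj s⁻¹ (inv_ne_zero hs)
  rw [inv_inv] at this
  exact this hβ
end

section
/- Let $K$ be a division ring with center $Z$, and let $a \in K$ be algebraic over $Z$ with minimal polynomial $f \in Z[t]$. Then $f$ factors in $K[t]$ as a product of linear factors $f = (t - b_1)\cdots(t - b_n)$, where each $b_i$ is conjugate in $K$ to $a$. (Wedderburn's factorization theorem.) -/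
open Polynomial

section WedderburnAux

variable {K : Type*} [DivisionRing K]

/-- Conjugation by a unit is multiplicative on powers. -/
private lemma conj_pow_val (c : Kˣ) (x : K) (n : ℕ) :
    ((c : K) * x * (c : K)⁻¹) ^ n = (c : K) * x ^ n * (c : K)⁻¹ := by
  induction n with
  | zero => simp
  | succ n ih =>
    rw [pow_succ, ih, pow_succ]
    simp [mul_assoc, inv_mul_cancel₀ (Units.ne_zero c)]

/-- Composition of conjugations. -/
private lemma conj_conj (d c : Kˣ) (a : K) :
    (d : K) * ((c : K) * a * (c : K)⁻¹) * (d : K)⁻¹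
      = ((d * c : Kˣ) : K) * a * (((d * c : Kˣ) : K))⁻¹ := by
  rw [Units.val_mul, mul_inv_rev]
  simp [mul_assoc]

/-- `X^n - C (b^n)` is right-divisible by `X - C b` in a noncommutative polynomial ring. -/
private lemma x_pow_factor (b : K) : ∀ n : ℕ,
    ∃ q : K[X], (X : K[X]) ^ n = q * (X - C b) + C (b ^ n)
  | 0 => ⟨0, by simp⟩
  | n + 1 => by
    obtain ⟨q, hq⟩ := x_pow_factor b n
    refine ⟨q * X + C (b ^ n), ?_⟩
    have hx : (X - C b) * X = X * (X - C b) := by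
      rw [sub_mul, mul_sub, X_mul_C]
    calc (X : K[X]) ^ (n + 1) = X ^ n * X := pow_succ X n
      _ = (q * (X - C b) + C (b ^ n)) * X := by rw [hq]
      _ = q * ((X - C b) * X) + C (b ^ n) * X := by rw [add_mul, mul_assoc]
      _ = q * (X * (X - C b)) + (C (b ^ n) * (X - C b) + C (b ^ n) * C b) := by
          rw [hx]
          noncomm_ring
      _ = (q * X + C (b ^ n)) * (X - C b) + C (b ^ (n + 1)) := by
          rw [pow_succ (a := b), C_mul]
          noncomm_ring
/-- Right division with remainder by `X - C b`. -/
private lemma exists_right_div (p : K[X]) (b : K) :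
    ∃ q : K[X], p = q * (X - C b) + C (p.eval b) := by
  induction p using Polynomial.induction_on' with
  | add p r hp hr =>
    obtain ⟨qp, hqp⟩ := hp
    obtain ⟨qr, hqr⟩ := hr
    refine ⟨qp + qr, ?_⟩
    rw [eval_add, C_add]
    calc p + r = qp * (X - C b) + C (p.eval b) + (qr * (X - C b) + C (r.eval b)) := by
          rw [← hqp, ← hqr]
      _ = (qp + qr) * (X - C b) + (C (p.eval b) + C (r.eval b)) := by noncomm_ring
  | monomial n c =>
    obtain ⟨q, hq⟩ := x_pow_factor b n
    refine ⟨C c * q, ?_⟩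
    rw [eval_monomial, ← C_mul_X_pow_eq_monomial, hq, mul_add, ← mul_assoc, ← C_mul]

/-- If `b` is a right root of `p` then `X - C b` right-divides `p`. -/
private lemma exists_right_factor {p : K[X]} {b : K} (h : p.eval b = 0) :
    ∃ q : K[X], p = q * (X - C b) := by
  obtain ⟨q, hq⟩ := exists_right_div p b
  exact ⟨q, by rwa [h, map_zero, add_zero] at hq⟩

/-- Noncommutative product evaluation formula: if `q.eval x = d` is a unit, then
`(p * q).eval x = p.eval (d * x * d⁻¹) * d`. -/
private lemma eval_mul_conj (p q : K[X]) (x : K) (d : Kˣ) (hd : q.eval x = (d : K)) :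
    (p * q).eval x = p.eval ((d : K) * x * (d : K)⁻¹) * (d : K) := by
  induction p using Polynomial.induction_on' with
  | add p r hp hr => rw [add_mul, eval_add, hp, hr, eval_add, add_mul]
  | monomial n c =>
    rw [eval_monomial, ← C_mul_X_pow_eq_monomial, mul_assoc, X_pow_mul, eval_C_mul,
      eval_mul_X_pow, hd, conj_pow_val]
    rw [mul_assoc, mul_assoc, mul_assoc, inv_mul_cancel₀ (Units.ne_zero d), mul_one]

/-- Evaluation of a polynomial with central coefficients commutes with conjugation. -/
private lemma eval_conj_central {p : K[X]} (hp : ∀ i, p.coeff i ∈ Subring.center K)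
    (c : Kˣ) (x : K) :
    p.eval ((c : K) * x * (c : K)⁻¹) = (c : K) * p.eval x * (c : K)⁻¹ := by
  rw [eval_eq_sum_range, eval_eq_sum_range, Finset.mul_sum, Finset.sum_mul]
  refine Finset.sum_congr rfl fun i _ => ?_
  have hcomm : (c : K) * p.coeff i = p.coeff i * (c : K) :=
    (Subring.mem_center_iff.mp (hp i) (c : K))
  rw [conj_pow_val]
  simp only [← mul_assoc]
  rw [hcomm]

/-- Normalization to a monic polynomial. -/
private lemma monic_C_inv_mul {p : K[X]} (hp : p ≠ 0) : (C p.leadingCoeff⁻¹ * p).Monic := by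
  have h := leadingCoeff_ne_zero.mpr hp
  have hdeg : (C p.leadingCoeff⁻¹ * p).natDegree = p.natDegree :=
    natDegree_C_mul (inv_ne_zero h)
  rw [Monic, leadingCoeff, hdeg, coeff_C_mul]
  exact inv_mul_cancel₀ h

end WedderburnAux

section LemA

variable {K : Type*} [DivisionRing K]

/-- Dickson's lemma: a monic polynomial vanishing at all conjugates of `a`
has degree at least that of the minimal polynomial of `a`. -/
private lemma degree_ge_of_vanishing (a : K) (f : K[X])
    (hmin : ∀ g : K[X], g ≠ 0 → (∀ i, g.coeff i ∈ Subring.center K) →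
      g.eval a = 0 → f.natDegree ≤ g.natDegree) :
    ∀ m : ℕ, ∀ p : K[X], p.natDegree = m → p.Monic →
      (∀ c : Kˣ, p.eval ((c : K) * a * (c : K)⁻¹) = 0) →
      f.natDegree ≤ m := by
  intro m
  induction m using Nat.strong_induction_on with
  | _ m ih =>
    intro p hdeg hmon hP
    by_cases hc : ∀ i, p.coeff i ∈ Subring.center K
    · have h1 : p.eval a = 0 := by simpa using hP 1
      have := hmin p hmon.ne_zero hc h1
      omega
    · push_neg at hc
      obtain ⟨i, hi⟩ := hc
      rw [Subring.mem_center_iff] at hi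
      push_neg at hi
      obtain ⟨d, hd⟩ := hi
      have hd0 : d ≠ 0 := by rintro rfl; simp at hd
      obtain ⟨dU, hdU⟩ := isUnit_iff_ne_zero.mpr hd0
      have hqcoeff : ∀ k, (p * C d - C d * p).coeff k = p.coeff k * d - d * p.coeff k := by
        intro k
        rw [coeff_sub, coeff_mul_C, coeff_C_mul]
      have hq0 : p * C d - C d * p ≠ 0 := by
        intro h
        apply hd
        have h2 : (p * C d - C d * p).coeff i = 0 := by rw [h, coeff_zero]
        rw [hqcoeff, sub_eq_zero] at h2
        exact h2.symm
      have hcoeff_hi : ∀ k, m ≤ k → (p * C d - C d * p).coeff k = 0 := by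
        intro k hk
        rcases eq_or_lt_of_le hk with heq | hlt
        · have h1 : p.coeff k = 1 := by
            rw [← heq, ← hdeg]
            exact hmon.coeff_natDegree
          rw [hqcoeff, h1, one_mul, mul_one, sub_self]
        · rw [hqcoeff, coeff_eq_zero_of_natDegree_lt (hdeg ▸ hlt), zero_mul, mul_zero, sub_self]
      have hqlt : (p * C d - C d * p).natDegree < m := by
        by_contra hcon
        push_neg at hcon
        have := hcoeff_hi _ hcon
        exact hq0 (leadingCoeff_eq_zero.mp this)
      have hPq : ∀ c : Kˣ, (p * C d - C d * p).eval ((c : K) * a * (c : K)⁻¹) = 0 := by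
        intro c
        have h1 := eval_mul_conj p (C d) ((c : K) * a * (c : K)⁻¹) dU (by rw [eval_C, hdU])
        rw [conj_conj dU c a] at h1
        rw [eval_sub, h1, hP (dU * c), zero_mul, eval_C_mul, hP c, mul_zero, sub_self]
      -- normalize and recurse
      set q : K[X] := p * C d - C d * p
      have hmon' : (C q.leadingCoeff⁻¹ * q).Monic := monic_C_inv_mul hq0
      have hdeg' : (C q.leadingCoeff⁻¹ * q).natDegree = q.natDegree :=
        natDegree_C_mul (inv_ne_zero (leadingCoeff_ne_zero.mpr hq0))
      have hPq' : ∀ c : Kˣ, (C q.leadingCoeff⁻¹ * q).eval ((c : K) * a * (c : K)⁻¹) = 0 := by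
        intro c
        rw [eval_C_mul, hPq c, mul_zero]
      have := ih q.natDegree hqlt (C q.leadingCoeff⁻¹ * q) hdeg' hmon' hPq'
      omega

end LemA

section Main

variable {K : Type*} [DivisionRing K]

private lemma list_prod_monic (l : List K) :
    ((l.map fun b => (X : K[X]) - C b).prod).Monic := by
  induction l with
  | nil => simp [monic_one]
  | cons b l ih => simpa using (monic_X_sub_C b).mul ih

private lemma list_prod_natDegree (l : List K) :
    ((l.map fun b => (X : K[X]) - C b).prod).natDegree = l.length := by
  induction l with
  | nil => simp
  | cons b l ih =>
    rw [List.map_cons, List.prod_cons, (monic_X_sub_C b).natDegree_mul (list_prod_monic l),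
      natDegree_X_sub_C, ih, List.length_cons]
    omega

private lemma main_induction (a : K) (f : K[X])
    (hcoeff : ∀ i, f.coeff i ∈ Subring.center K)
    (hroot : f.eval a = 0)
    (hmin : ∀ g : K[X], g ≠ 0 → (∀ i, g.coeff i ∈ Subring.center K) →
      g.eval a = 0 → f.natDegree ≤ g.natDegree) :
    ∀ m : ℕ, ∀ g : K[X], g.Monic → g.natDegree = m →
      ∀ l : List K, (∀ b ∈ l, ∃ c : Kˣ, b = (c : K) * a * (c : K)⁻¹) →
      f = g * (l.map fun b => X - C b).prod →
      ∃ l' : List K, l'.length = m ∧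
        (∀ b ∈ l', ∃ c : Kˣ, b = (c : K) * a * (c : K)⁻¹) ∧
        g = (l'.map fun b => X - C b).prod := by
  intro m
  induction m with
  | zero =>
    intro g hg hdeg l _ _
    exact ⟨[], rfl, by simp, by simpa using (hg.natDegree_eq_zero.mp hdeg)⟩
  | succ m ih =>
    intro g hg hdeg l hl hfl
    have hhmonic : ((l.map fun b => (X : K[X]) - C b).prod).Monic := list_prod_monic l
    have hhdeg : ((l.map fun b => (X : K[X]) - C b).prod).natDegree = l.length :=
      list_prod_natDegree l
    have hfdeg : f.natDegree = (m + 1) + l.length := by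
      rw [hfl, hg.natDegree_mul hhmonic, hdeg, hhdeg]
    -- there is a conjugate of `a` where the product does not vanish
    have hex : ∃ c : Kˣ,
        ((l.map fun b => (X : K[X]) - C b).prod).eval ((c : K) * a * (c : K)⁻¹) ≠ 0 := by
      by_contra hcon
      push_neg at hcon
      have := degree_ge_of_vanishing a f hmin l.length
        (l.map fun b => (X : K[X]) - C b).prod hhdeg hhmonic hcon
      omega
    obtain ⟨c, hc⟩ := hex
    obtain ⟨dU, hdU⟩ := isUnit_iff_ne_zero.mpr hc
    have hfx : f.eval ((c : K) * a * (c : K)⁻¹) = 0 := by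
      rw [eval_conj_central hcoeff, hroot, mul_zero, zero_mul]
    have hgx : g.eval (((dU * c : Kˣ) : K) * a * (((dU * c : Kˣ) : K))⁻¹) = 0 := by
      have h1 := eval_mul_conj g (l.map fun b => (X : K[X]) - C b).prod
        ((c : K) * a * (c : K)⁻¹) dU hdU.symm
      rw [← hfl, hfx, conj_conj dU c a] at h1
      have h2 := h1.symm
      rw [mul_eq_zero] at h2
      rcases h2 with h2 | h2
      · exact h2
      · exact absurd h2 (dU).ne_zero
    obtain ⟨g', hg'⟩ := exists_right_factor hgx
    set b₀ : K := ((dU * c : Kˣ) : K) * a * (((dU * c : Kˣ) : K))⁻¹ with hb₀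
    have hb₀conj : ∃ e : Kˣ, b₀ = (e : K) * a * (e : K)⁻¹ := ⟨dU * c, rfl⟩
    have hg'monic : g'.Monic := Monic.of_mul_monic_right (monic_X_sub_C b₀) (hg' ▸ hg)
    have hg'deg : g'.natDegree = m := by
      have := hg'monic.natDegree_mul (monic_X_sub_C b₀)
      rw [← hg', hdeg, natDegree_X_sub_C] at this
      omega
    have hfl' : f = g' * ((b₀ :: l).map fun b => X - C b).prod := by
      rw [List.map_cons, List.prod_cons, ← mul_assoc, ← hg', hfl]
    have hl' : ∀ b ∈ (b₀ :: l), ∃ e : Kˣ, b = (e : K) * a * (e : K)⁻¹ := by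
      intro b hb
      rcases List.mem_cons.mp hb with hb | hb
      · exact hb ▸ hb₀conj
      · exact hl b hb
    obtain ⟨l'', hlen, hconj, hprod⟩ := ih g' hg'monic hg'deg (b₀ :: l) hl' hfl'
    refine ⟨l'' ++ [b₀], by simp [hlen], ?_, ?_⟩
    · intro b hb
      rcases List.mem_append.mp hb with hb | hb
      · exact hconj b hb
      · rcases List.mem_singleton.mp hb with rfl
        exact hb₀conj
    · rw [List.map_append, List.prod_append, List.map_singleton, List.prod_singleton,
        ← hprod, ← hg']

private lemma ofFn_eq_map {α β : Type*} (l : List α) (F : α → β) {n : ℕ} (h : l.length = n) :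
    List.ofFn (fun i : Fin n => F (l.get (Fin.cast h.symm i))) = l.map F := by
  subst h
  have : (fun i : Fin l.length => F (l.get (Fin.cast rfl i))) = F ∘ l.get := rfl
  rw [this, ← List.map_ofFn, List.ofFn_get]

end Main

theorem stmt_18 {K : Type*} [DivisionRing K] (a : K) (f : K[X])
    (hmonic : f.Monic)
    (hcoeff : ∀ i, f.coeff i ∈ Subring.center K)
    (hroot : f.eval a = 0)
    (hmin : ∀ g : K[X], g ≠ 0 → (∀ i, g.coeff i ∈ Subring.center K) →
      g.eval a = 0 → f.natDegree ≤ g.natDegree) :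
    ∃ b : Fin f.natDegree → K,
      f = (List.ofFn fun i => X - C (b i)).prod ∧
      ∀ i, ∃ c : Kˣ, b i = c * a * (c : K)⁻¹ := by
  obtain ⟨l', hlen, hconj, hprod⟩ :=
    main_induction a f hcoeff hroot hmin f.natDegree f hmonic rfl [] (by simp) (by simp)
  refine ⟨fun i => l'.get (Fin.cast hlen.symm i), ?_, ?_⟩
  · rw [ofFn_eq_map l' (fun b => X - C b) hlen]
    exact hprod
  · intro i
    exact hconj _ (List.get_mem l' _)
end

section
/- Let $K$ be a division ring, $G$ a group of automorphisms of $K$, $K^G$ its fixed division subring, and $a \in K$ such that $\Delta = G.a = \{\sigma(a) : \sigma \in G\}$ is algebraic (annihilated by some nonzero polynomial over $K$) with minimal polynomial $f_\Delta \in K^G[t]$. If every right root in $K$ of $f_\Delta$ lies in $\Delta$ (i.e., $\Delta$ is full), then $f_\Delta$ is irreducible in $K^G[t]$. -/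
open Polynomial

private lemma conj_pow'_s19 {K : Type*} [DivisionRing K] (e b : K) (he : e ≠ 0) :
    ∀ l : ℕ, (e * b * e⁻¹) ^ l = e * b ^ l * e⁻¹
  | 0 => by simp [mul_inv_cancel₀ he]
  | (l + 1) => by
    rw [pow_succ, conj_pow'_s19 e b he l, pow_succ]
    simp only [mul_assoc]
    congr 1
    congr 1
    rw [← mul_assoc e⁻¹ e, inv_mul_cancel₀ he, one_mul]

private lemma eval_mul_eq' {K : Type*} [DivisionRing K] (p q : K[X]) (b : K) :
    (p * q).eval b = (p * C (q.eval b)).eval b := by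
  induction p using Polynomial.induction_on' with
  | add p₁ p₂ h1 h2 => rw [add_mul, add_mul, eval_add, eval_add, h1, h2]
  | monomial n x =>
    have hL : (monomial n x * q).eval b = x * (q.eval b * b ^ n) := by
      rw [← C_mul_X_pow_eq_monomial, mul_assoc, X_pow_mul, eval_C_mul, eval_mul_X_pow]
    have hR : (monomial n x * C (q.eval b)).eval b = x * (q.eval b * b ^ n) := by
      rw [monomial_mul_C, eval_monomial, mul_assoc]
    rw [hL, hR]

private lemma eval_mul_C_ne' {K : Type*} [DivisionRing K] (p : K[X]) (y b : K) (hy : y ≠ 0) :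
    (p * C y).eval b = p.eval (y * b * y⁻¹) * y := by
  induction p using Polynomial.induction_on' with
  | add p₁ p₂ h1 h2 => rw [add_mul, eval_add, h1, h2, eval_add, add_mul]
  | monomial n x =>
    rw [monomial_mul_C, eval_monomial, eval_monomial, conj_pow'_s19 y b hy n,
      mul_assoc x (y * b ^ n * y⁻¹) y, mul_assoc (y * b ^ n) y⁻¹ y, inv_mul_cancel₀ hy, mul_one,
      mul_assoc]

private lemma eval_mul_zero' {K : Type*} [DivisionRing K] (p q : K[X]) (b : K)
    (hq : q.eval b = 0) : (p * q).eval b = 0 := by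
  rw [eval_mul_eq', hq, map_zero, mul_zero, eval_zero]

private lemma xpow_dec' {K : Type*} [DivisionRing K] (d : K) :
    ∀ n : ℕ, ∃ s : K[X], (X : K[X]) ^ n = s * (X - C d) + C (d ^ n)
  | 0 => ⟨0, by simp⟩
  | (n + 1) => by
    obtain ⟨s, hs⟩ := xpow_dec' d n
    refine ⟨s * X + C (d ^ n), ?_⟩
    have hcomm : (X - C d) * X = X * (X - C d) := by
      rw [sub_mul, mul_sub, X_mul_C]
    have h1 : C (d ^ n) * C d = C (d ^ (n + 1)) := by rw [← C_mul, ← pow_succ]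
    calc (X : K[X]) ^ (n + 1) = (s * (X - C d) + C (d ^ n)) * X := by rw [pow_succ, hs]
      _ = s * X * (X - C d) + C (d ^ n) * X := by
          rw [add_mul, mul_assoc, hcomm, ← mul_assoc]
      _ = s * X * (X - C d) + (C (d ^ n) * (X - C d) + C (d ^ (n + 1))) := by
          rw [← h1, mul_sub, mul_sub, sub_add_cancel]
      _ = (s * X + C (d ^ n)) * (X - C d) + C (d ^ (n + 1)) := by
          rw [add_mul, add_assoc]

private lemma exists_div_lin' {K : Type*} [DivisionRing K] (p : K[X]) (d : K)
    (h0 : p.eval d = 0) : ∃ q : K[X], p = q * (X - C d) := by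
  have H : ∀ p : K[X], ∃ q : K[X], p = q * (X - C d) + C (p.eval d) := by
    intro p
    induction p using Polynomial.induction_on' with
    | add p₁ p₂ h1 h2 =>
      obtain ⟨q₁, hq₁⟩ := h1
      obtain ⟨q₂, hq₂⟩ := h2
      refine ⟨q₁ + q₂, ?_⟩
      rw [eval_add, C_add, add_mul]
      calc p₁ + p₂ = (q₁ * (X - C d) + C (p₁.eval d)) + (q₂ * (X - C d) + C (p₂.eval d)) := by
            rw [← hq₁, ← hq₂]
        _ = q₁ * (X - C d) + q₂ * (X - C d) + (C (p₁.eval d) + C (p₂.eval d)) := by abel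
    | monomial n x =>
      obtain ⟨s, hs⟩ := xpow_dec' d n
      refine ⟨C x * s, ?_⟩
      rw [eval_monomial, ← C_mul_X_pow_eq_monomial, hs, mul_add, ← mul_assoc, ← C_mul]
  obtain ⟨q, hq⟩ := H p
  rw [h0, map_zero, add_zero] at hq
  exact ⟨q, hq⟩

private lemma eval_fix' {K : Type*} [DivisionRing K] (σ : RingAut K) (p : K[X])
    (hp : ∀ i, σ (p.coeff i) = p.coeff i) (x : K) : p.eval (σ x) = σ (p.eval x) := by
  rw [eval_eq_sum_range, eval_eq_sum_range, map_sum]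
  refine Finset.sum_congr rfl fun l _ => ?_
  rw [map_mul, map_pow, hp l]

private lemma eval_map_apply' {K : Type*} [DivisionRing K] (σ : RingAut K) (p : K[X]) (x : K) :
    (p.map (σ : K →+* K)).eval (σ x) = σ (p.eval x) := by
  rw [eval_map]
  exact eval₂_at_apply (σ : K →+* K) x

private lemma lemB' {K : Type*} [DivisionRing K] :
    ∀ (k : ℕ) (bv : Fin k → K) (W : Submodule K (Fin k → K)),
      (∀ x ∈ W, (fun i => x i * bv i) ∈ W) → W ≠ ⊤ →
      ∃ (j : Fin k) (u : Fin k → K), (∃ i, u i ≠ 0) ∧ (∀ i, bv i * u i = u i * bv j) ∧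
        ∀ x ∈ W, ∑ i, x i * u i = 0 := by
  intro k
  induction k with
  | zero =>
    intro bv W hT hW
    exact absurd (by ext x; simpa using (funext (fun i : Fin 0 => i.elim0) : x = 0) ▸ W.zero_mem)
      hW
  | succ k ih =>
    intro bv W hT hW
    set π : (Fin (k + 1) → K) →ₗ[K] (Fin k → K) :=
      LinearMap.funLeft K K Fin.castSucc with hπ
    have hπapp : ∀ (x : Fin (k + 1) → K) (i : Fin k), π x i = x i.castSucc := fun _ _ => rfl
    set W' : Submodule K (Fin k → K) := W.map π with hW'def
    have hT' : ∀ x ∈ W', (fun i => x i * bv i.castSucc) ∈ W' := by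
      rintro x ⟨w, hw, rfl⟩
      exact ⟨fun i => w i * bv i, hT w hw, rfl⟩
    by_cases hW' : W' = ⊤
    · by_cases heL : Pi.single (Fin.last k) (1 : K) ∈ W
      · exfalso
        apply hW
        rw [eq_top_iff]
        rintro x -
        have hx' : π x ∈ W' := by rw [hW']; trivial
        obtain ⟨w, hw, hwe⟩ := hx'
        have hxw : x = w + (x (Fin.last k) - w (Fin.last k)) •
            (Pi.single (Fin.last k) (1 : K) : Fin (k+1) → K) := by
          funext i
          refine Fin.lastCases ?_ (fun i' => ?_) i
          · simp
          · have h1 : w i'.castSucc = x i'.castSucc := by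
              have := congrFun hwe i'
              rwa [hπapp] at this
            have h2 : (Pi.single (Fin.last k) (1 : K) : Fin (k+1) → K) i'.castSucc = 0 :=
              Pi.single_eq_of_ne (Fin.castSucc_lt_last i').ne 1
            simp [h1, h2]
        rw [hxw]
        exact W.add_mem hw (W.smul_mem _ heL)
      · -- graph case
        have hpre : ∀ i : Fin k, ∃ w, w ∈ W ∧ π w = Pi.single i 1 := by
          intro i
          have : Pi.single i (1 : K) ∈ W' := by rw [hW']; trivial
          obtain ⟨w, hw, he⟩ := this
          exact ⟨w, hw, he⟩
        choose wv hwv hwe using hpre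
        have hker : ∀ v ∈ W, π v = 0 → v = 0 := by
          intro v hv hpv
          by_contra hv0
          have hvl : v (Fin.last k) ≠ 0 := by
            intro h0
            apply hv0
            funext i
            refine Fin.lastCases h0 (fun i' => ?_) i
            have := congrFun hpv i'
            rwa [hπapp] at this
          apply heL
          have h2 : Pi.single (Fin.last k) (1 : K) = (v (Fin.last k))⁻¹ • v := by
            funext i
            refine Fin.lastCases ?_ (fun i' => ?_) i
            · simp [inv_mul_cancel₀ hvl]
            · have h3 : v i'.castSucc = 0 := by
                have := congrFun hpv i'
                rwa [hπapp] at this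
              simp [h3, Pi.single_eq_of_ne (Fin.castSucc_lt_last i').ne]
          rw [h2]
          exact W.smul_mem _ hv
        have KEY : ∀ v ∈ W, v (Fin.last k) = ∑ i, v i.castSucc * wv i (Fin.last k) := by
          intro v hv
          have hv'W : v - ∑ i, v i.castSucc • wv i ∈ W :=
            W.sub_mem hv (Submodule.sum_mem W fun i _ => W.smul_mem _ (hwv i))
          have hπ0 : π (v - ∑ i, v i.castSucc • wv i) = 0 := by
            funext i
            rw [hπapp]
            have hsum : (∑ j, v j.castSucc • wv j) i.castSucc
                = ∑ j, v j.castSucc * wv j i.castSucc := by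
              rw [Finset.sum_apply]
              exact Finset.sum_congr rfl fun j _ => rfl
            have hwj : ∀ j : Fin k, wv j i.castSucc = (Pi.single j (1 : K) : Fin k → K) i := by
              intro j
              have := congrFun (hwe j) i
              rwa [hπapp] at this
            have : ∑ j, v j.castSucc * wv j i.castSucc = v i.castSucc := by
              rw [Finset.sum_congr rfl fun j _ => by rw [hwj j]]
              rw [Finset.sum_eq_single i (fun j _ hj => by
                  rw [Pi.single_eq_of_ne (Ne.symm hj), mul_zero])
                (fun hni => absurd (Finset.mem_univ i) hni)]
              simp
            simp only [Pi.sub_apply, hsum, this, sub_self, Pi.zero_apply]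
          have hv0 := hker _ hv'W hπ0
          have := congrFun hv0 (Fin.last k)
          have hsum2 : (∑ i, v i.castSucc • wv i) (Fin.last k)
              = ∑ i, v i.castSucc * wv i (Fin.last k) := by
            rw [Finset.sum_apply]
            exact Finset.sum_congr rfl fun j _ => rfl
          rw [Pi.sub_apply, hsum2, Pi.zero_apply, sub_eq_zero] at this
          exact this
        refine ⟨Fin.last k, Fin.snoc (fun i => wv i (Fin.last k)) (-1),
          ⟨Fin.last k, by simp⟩, ?_, ?_⟩
        · intro i
          refine Fin.lastCases ?_ (fun i' => ?_) i
          · rw [Fin.snoc_last]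
            rw [mul_neg, neg_mul, mul_one, one_mul]
          · rw [Fin.snoc_castSucc]
            have h1 := KEY (fun j => wv i' j * bv j) (hT _ (hwv i'))
            have hwj : ∀ j : Fin k, wv i' j.castSucc = (Pi.single i' (1 : K) : Fin k → K) j := by
              intro j
              have := congrFun (hwe i') j
              rwa [hπapp] at this
            have h2 : ∑ j, (wv i' j.castSucc * bv j.castSucc) * wv j (Fin.last k)
                = bv i'.castSucc * wv i' (Fin.last k) := by
              rw [Finset.sum_congr rfl fun j _ => by rw [hwj j]]
              rw [Finset.sum_eq_single i' (fun j _ hj => by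
                  rw [Pi.single_eq_of_ne hj, zero_mul, zero_mul])
                (fun hni => absurd (Finset.mem_univ i') hni)]
              simp
            have h1' : wv i' (Fin.last k) * bv (Fin.last k)
                = ∑ j, wv i' j.castSucc * bv j.castSucc * wv j (Fin.last k) := h1
            rw [← h2, ← h1']
        · intro x hx
          rw [Fin.sum_univ_castSucc]
          simp only [Fin.snoc_castSucc, Fin.snoc_last]
          rw [← KEY x hx, mul_neg, mul_one, add_neg_cancel]
    · obtain ⟨j', u', ⟨i₀, hi₀⟩, hrel, hsum⟩ := ih (fun i => bv i.castSucc) W' hT' hW'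
      refine ⟨j'.castSucc, Fin.snoc u' 0, ⟨i₀.castSucc, by rwa [Fin.snoc_castSucc]⟩, ?_, ?_⟩
      · intro i
        refine Fin.lastCases ?_ (fun i' => ?_) i
        · rw [Fin.snoc_last, mul_zero, zero_mul]
        · rw [Fin.snoc_castSucc]
          exact hrel i'
      · intro x hx
        rw [Fin.sum_univ_castSucc]
        simp only [Fin.snoc_castSucc, Fin.snoc_last, mul_zero, add_zero]
        exact hsum (π x) ⟨x, hx, rfl⟩

theorem stmt_19 {K : Type*} [DivisionRing K] (G : Subgroup (RingAut K)) (a : K)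
    (f : K[X]) (hmonic : f.Monic)
    (hfix : ∀ σ ∈ G, ∀ i, σ (f.coeff i) = f.coeff i)
    (hvanish : ∀ σ ∈ G, f.eval (σ a) = 0)
    (hmin : ∀ g : K[X], g.Monic → (∀ σ ∈ G, ∀ i, σ (g.coeff i) = g.coeff i) →
      (∀ σ ∈ G, g.eval (σ a) = 0) → f.natDegree ≤ g.natDegree)
    (hfull : ∀ b : K, f.eval b = 0 → ∃ σ ∈ G, b = σ a) :
    ∀ g h : K[X], (∀ σ ∈ G, ∀ i, σ (g.coeff i) = g.coeff i) →
      (∀ σ ∈ G, ∀ i, σ (h.coeff i) = h.coeff i) →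
      f = g * h → g.natDegree = 0 ∨ h.natDegree = 0 := by
  intro g h hgfix hhfix hfgh
  by_contra hcon
  push_neg at hcon
  obtain ⟨hg0, hh0⟩ := hcon
  have hf0 : f ≠ 0 := hmonic.ne_zero
  have hg : g ≠ 0 := by rintro rfl; rw [zero_mul] at hfgh; exact hf0 hfgh
  have hh : h ≠ 0 := by rintro rfl; rw [mul_zero] at hfgh; exact hf0 hfgh
  have hdeg : f.natDegree = g.natDegree + h.natDegree := by
    rw [hfgh, natDegree_mul hg hh]
  -- minimality: any fixed-coefficient polynomial vanishing at `a` of degree < deg f is 0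
  have MIN : ∀ p : K[X], (∀ σ ∈ G, ∀ i, σ (p.coeff i) = p.coeff i) → p.eval a = 0 →
      p.natDegree < f.natDegree → p = 0 := by
    intro p hfix2 hpa hdeg2
    by_contra hp0
    have hu : p.leadingCoeff ≠ 0 := leadingCoeff_ne_zero.mpr hp0
    set u := p.leadingCoeff with hudef
    set p' := C u⁻¹ * p with hp'def
    have h1 : C u * p' = p := by
      rw [hp'def, ← mul_assoc, ← C_mul, mul_inv_cancel₀ hu, C_1, one_mul]
    have hdeg' : p'.natDegree = p.natDegree := by
      refine le_antisymm (natDegree_C_mul_le _ _) ?_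
      conv_lhs => rw [← h1]
      exact natDegree_C_mul_le _ _
    have hmono : p'.Monic := by
      rw [Monic, Polynomial.leadingCoeff, hdeg', hp'def, coeff_C_mul]
      exact inv_mul_cancel₀ hu
    have hfix' : ∀ σ ∈ G, ∀ i, σ (p'.coeff i) = p'.coeff i := by
      intro σ hσ i
      have huf : σ u = u := hfix2 σ hσ p.natDegree
      rw [hp'def, coeff_C_mul, map_mul, map_inv₀, huf, hfix2 σ hσ i]
    have hvan' : ∀ σ ∈ G, p'.eval (σ a) = 0 := by
      intro σ hσ
      rw [eval_fix' σ p' (hfix' σ hσ) a, hp'def, eval_C_mul, hpa, mul_zero, map_zero]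
    have := hmin p' hmono hfix' hvan'
    omega
  -- case: h vanishes at a
  by_cases hc : h.eval a = 0
  · exact hh (MIN h hhfix hc (by omega))
  -- h has no roots at all
  have hrootless : ∀ b : K, h.eval b ≠ 0 := by
    intro b hb
    obtain ⟨σ, hσ, rfl⟩ := hfull b (by rw [hfgh]; exact eval_mul_zero' g h _ hb)
    rw [eval_fix' σ h (hhfix σ hσ) a] at hb
    exact hc (σ.injective (by rw [hb, map_zero]))
  -- f vanishes on the orbit; generator machinery
  have FVAN : ∀ (k : ℕ) (bb : Fin k → K), (∀ i, ∃ σ ∈ G, bb i = σ a) →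
      ∀ i, f.eval (bb i) = 0 := by
    intro k bb horb i
    obtain ⟨σ, hσ, hbi⟩ := horb i
    rw [hbi]; exact hvanish σ hσ
  have FEQ2 : ∀ (m : K[X]) (k : ℕ) (bb : Fin k → K), m.Monic →
      (∀ i, ∃ σ ∈ G, bb i = σ a) →
      (∀ p : K[X], (∀ i, p.eval (bb i) = 0) → ∃ q, p = q * m) →
      f.natDegree ≤ m.natDegree → f = m := by
    intro m k bb hm horb hgen hd
    obtain ⟨qf, hqf⟩ := hgen f (FVAN k bb horb)
    have hqf0 : qf ≠ 0 := by rintro rfl; rw [zero_mul] at hqf; exact hf0 hqf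
    have hd2 : f.natDegree = qf.natDegree + m.natDegree := by
      rw [hqf, natDegree_mul hqf0 hm.ne_zero]
    have hqd : qf.natDegree = 0 := by omega
    have hql : qf.leadingCoeff = 1 := by
      have := leadingCoeff_mul_monic hm (p := qf)
      rw [← hqf] at this
      rw [← this]; exact hmonic
    have : qf = 1 := (Monic.natDegree_eq_zero hql).mp hqd
    rw [hqf, this, one_mul]
  have FEQ : ∀ (m : K[X]) (k : ℕ) (bb : Fin k → K), m.Monic →
      (∀ i, ∃ σ ∈ G, bb i = σ a) →
      (∀ p : K[X], (∀ i, p.eval (bb i) = 0) → ∃ q, p = q * m) →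
      (∀ σ ∈ G, m.eval (σ a) = 0) → f = m := by
    intro m k bb hm horb hgen hall
    have hfixm : ∀ σ ∈ G, ∀ i, σ (m.coeff i) = m.coeff i := by
      intro σ hσ
      have hmap : m.map (σ : K →+* K) = m := by
        have hvm : ∀ i, (m.map (σ : K →+* K)).eval (bb i) = 0 := by
          intro i
          obtain ⟨τ, hτ, hbi⟩ := horb i
          have h2 : σ ((σ⁻¹ * τ : RingAut K) a) = τ a := by
            show (σ * (σ⁻¹ * τ)) a = τ a
            rw [← mul_assoc, mul_inv_cancel, one_mul]
          rw [hbi, ← h2, eval_map_apply' σ m _, hall _ (mul_mem (inv_mem hσ) hτ), map_zero]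
        obtain ⟨q, hq⟩ := hgen (m.map (σ : K →+* K)) hvm
        have hd : (m.map (σ : K →+* K)).natDegree ≤ m.natDegree := natDegree_map_le
        have hq0 : q ≠ 0 := by
          rintro rfl; rw [zero_mul] at hq; exact (hm.map (σ : K →+* K)).ne_zero hq
        have hd2 := natDegree_mul hq0 hm.ne_zero
        rw [← hq] at hd2
        have hqd : q.natDegree = 0 := by omega
        have hql : q.leadingCoeff = 1 := by
          have := leadingCoeff_mul_monic hm (p := q)
          rw [← hq] at this
          rw [← this]; exact hm.map (σ : K →+* K)
        have : q = 1 := (Monic.natDegree_eq_zero hql).mp hqd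
        rw [hq, this, one_mul]
      intro i
      conv_rhs => rw [← hmap]
      rw [coeff_map]
      rfl
    have hnle := hmin m hm hfixm hall
    exact FEQ2 m k bb hm horb hgen hnle
  -- build a finite generating set for the vanishing ideal of the orbit
  have REC : ∀ fuel : ℕ, ∀ (m : K[X]) (k : ℕ) (bb : Fin k → K), m.Monic →
      (∀ i, ∃ σ ∈ G, bb i = σ a) → (∀ i, m.eval (bb i) = 0) →
      (∀ p : K[X], (∀ i, p.eval (bb i) = 0) → ∃ q, p = q * m) →
      f.natDegree ≤ m.natDegree + fuel →
      ∃ (k' : ℕ) (bb' : Fin k' → K), (∀ i, ∃ σ ∈ G, bb' i = σ a) ∧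
        ∀ p : K[X], (∀ i, p.eval (bb' i) = 0) → ∃ q, p = q * f := by
    intro fuel
    induction fuel with
    | zero =>
      intro m k bb hm horb hz hgen hd
      by_cases hall : ∀ σ ∈ G, m.eval (σ a) = 0
      · exact ⟨k, bb, horb, (FEQ m k bb hm horb hgen hall) ▸ hgen⟩
      · exfalso
        push_neg at hall
        obtain ⟨σ, hσ, hne⟩ := hall
        have hfm : f = m := FEQ2 m k bb hm horb hgen (by omega)
        exact hne (hfm ▸ hvanish σ hσ)
    | succ fuel ihf =>
      intro m k bb hm horb hz hgen hd
      by_cases hall : ∀ σ ∈ G, m.eval (σ a) = 0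
      · exact ⟨k, bb, horb, (FEQ m k bb hm horb hgen hall) ▸ hgen⟩
      · push_neg at hall
        obtain ⟨σ, hσ, hy⟩ := hall
        set d := m.eval (σ a) * (σ a) * (m.eval (σ a))⁻¹ with hddef
        refine ihf ((X - C d) * m) (k + 1) (Fin.snoc bb (σ a))
          ((monic_X_sub_C d).mul hm) ?_ ?_ ?_ ?_
        · intro i
          refine Fin.lastCases ?_ (fun i' => ?_) i
          · rw [Fin.snoc_last]; exact ⟨σ, hσ, rfl⟩
          · rw [Fin.snoc_castSucc]; exact horb i'
        · intro i
          refine Fin.lastCases ?_ (fun i' => ?_) i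
          · rw [Fin.snoc_last, eval_mul_eq', eval_mul_C_ne' _ _ _ hy]
            rw [← hddef]
            simp
          · rw [Fin.snoc_castSucc]
            exact eval_mul_zero' _ _ _ (hz i')
        · intro p hp
          obtain ⟨q, hq⟩ := hgen p (fun i' => by
            have := hp i'.castSucc
            rwa [Fin.snoc_castSucc] at this)
          have h0 : q.eval d = 0 := by
            have hl := hp (Fin.last k)
            rw [Fin.snoc_last, hq, eval_mul_eq', eval_mul_C_ne' _ _ _ hy, ← hddef] at hl
            exact (mul_eq_zero.mp hl).resolve_right hy
          obtain ⟨q₁, hq₁⟩ := exists_div_lin' q d h0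
          exact ⟨q₁, by rw [hq, hq₁, mul_assoc]⟩
        · have hmd : ((X - C d) * m).natDegree = m.natDegree + 1 := by
            rw [natDegree_mul (X_sub_C_ne_zero d) hm.ne_zero, natDegree_X_sub_C]
            omega
          omega
  obtain ⟨k₁, bb₁, horb₁, hgen₁⟩ := REC f.natDegree 1 0 Fin.elim0 monic_one
    (fun i => i.elim0) (fun i => i.elim0) (fun p _ => ⟨p, (mul_one p).symm⟩)
    (by rw [natDegree_one]; omega)
  -- prune to get delta functions
  have PRUNE : ∀ (k : ℕ) (bb : Fin k → K), (∀ i, ∃ σ ∈ G, bb i = σ a) →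
      (∀ p : K[X], (∀ i, p.eval (bb i) = 0) → ∃ q, p = q * f) →
      ∃ (k' : ℕ) (bb' : Fin k' → K), (∀ i, ∃ σ ∈ G, bb' i = σ a) ∧
        (∀ p : K[X], (∀ i, p.eval (bb' i) = 0) → ∃ q, p = q * f) ∧
        ∀ i, ∃ p : K[X], p.eval (bb' i) = 1 ∧ ∀ j, j ≠ i → p.eval (bb' j) = 0 := by
    intro k
    induction k with
    | zero =>
      intro bb horb hgen
      exact ⟨0, bb, horb, hgen, fun i => i.elim0⟩
    | succ k' ih =>
      intro bb horb hgen
      by_cases hrem : ∃ i₀ : Fin (k' + 1), ∀ p : K[X],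
          (∀ i, p.eval (bb (i₀.succAbove i)) = 0) → ∃ q, p = q * f
      · obtain ⟨i₀, hi₀⟩ := hrem
        exact ih (bb ∘ i₀.succAbove) (fun i => horb _) hi₀
      · push_neg at hrem
        refine ⟨k' + 1, bb, horb, hgen, ?_⟩
        intro i₀
        obtain ⟨p, hpz, hpn⟩ := hrem i₀
        have hy : p.eval (bb i₀) ≠ 0 := by
          intro h0
          obtain ⟨q, hq⟩ := hgen p (fun j => by
            by_cases hj : j = i₀
            · rw [hj]; exact h0
            · obtain ⟨i, hi⟩ := Fin.exists_succAbove_eq hj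
              rw [← hi]; exact hpz i)
          exact hpn q hq
        refine ⟨C (p.eval (bb i₀))⁻¹ * p, ?_, ?_⟩
        · rw [eval_C_mul, inv_mul_cancel₀ hy]
        · intro j hj
          obtain ⟨i, hi⟩ := Fin.exists_succAbove_eq hj
          rw [eval_C_mul, ← hi, hpz i, mul_zero]
  obtain ⟨k, bv, horb, hgen, hdelta⟩ := PRUNE k₁ bb₁ horb₁ hgen₁
  -- the submodule W of values of left multiples of h
  let W : Submodule K (Fin k → K) :=
    { carrier := {x | ∃ q : K[X], ∀ i, x i = (q * h).eval (bv i)}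
      add_mem' := by
        rintro x y ⟨q1, h1⟩ ⟨q2, h2⟩
        exact ⟨q1 + q2, fun i => by
          rw [Pi.add_apply, h1 i, h2 i, add_mul, eval_add]⟩
      zero_mem' := ⟨0, fun i => by rw [Pi.zero_apply, zero_mul, eval_zero]⟩
      smul_mem' := by
        rintro c x ⟨q, h1⟩
        exact ⟨C c * q, fun i => by
          rw [Pi.smul_apply, smul_eq_mul, h1 i, mul_assoc, eval_C_mul]⟩ }
  have hmemW : ∀ x : Fin k → K, x ∈ W ↔ ∃ q : K[X], ∀ i, x i = (q * h).eval (bv i) :=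
    fun x => Iff.rfl
  have hTW : ∀ x ∈ W, (fun i => x i * bv i) ∈ W := by
    intro x hx
    obtain ⟨q, hq⟩ := (hmemW x).mp hx
    refine (hmemW _).mpr ⟨q * X, fun i => ?_⟩
    rw [mul_assoc, X_mul, ← mul_assoc, eval_mul_X, hq i]
  have hWproper : W ≠ ⊤ := by
    intro htop
    have h1 : (fun _ : Fin k => (1 : K)) ∈ W := by rw [htop]; trivial
    obtain ⟨q, hq⟩ := (hmemW _).mp h1
    have hvan1 : ∀ i, (1 - q * h).eval (bv i) = 0 := by
      intro i
      rw [eval_sub, eval_one, ← hq i, sub_self]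
    obtain ⟨r, hr⟩ := hgen _ hvan1
    have he1 : (1 : K[X]) = (r * g + q) * h := by
      have h2 : (1 : K[X]) = r * f + q * h := eq_add_of_sub_eq hr
      rw [h2, hfgh, ← mul_assoc, ← add_mul]
    have hq' : r * g + q ≠ 0 := by
      rintro h0
      rw [h0, zero_mul] at he1
      exact one_ne_zero he1
    have := congrArg natDegree he1
    rw [natDegree_one, natDegree_mul hq' hh] at this
    omega
  obtain ⟨j, u, ⟨i₀, hi₀⟩, hrel, hsum⟩ := lemB' k bv W hTW hWproper
  set b₀ := bv j with hb₀
  set e := ∑ i, u i with hedef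
  have POW : ∀ (l : ℕ) (i : Fin k), bv i ^ l * u i = u i * b₀ ^ l := by
    intro l
    induction l with
    | zero => intro i; rw [pow_zero, pow_zero, one_mul, mul_one]
    | succ l ihl =>
      intro i
      rw [pow_succ, pow_succ, mul_assoc, hrel i, ← mul_assoc, ihl i, mul_assoc]
  have PSI : ∀ p : K[X], (∑ i, p.eval (bv i) * u i)
      = ∑ l ∈ Finset.range (p.natDegree + 1), p.coeff l * (e * b₀ ^ l) := by
    intro p
    have h1 : ∀ i : Fin k, p.eval (bv i) * u i
        = ∑ l ∈ Finset.range (p.natDegree + 1), p.coeff l * (u i * b₀ ^ l) := by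
      intro i
      rw [eval_eq_sum_range, Finset.sum_mul]
      refine Finset.sum_congr rfl fun l _ => ?_
      rw [mul_assoc, POW l i]
    calc (∑ i, p.eval (bv i) * u i)
        = ∑ i : Fin k, ∑ l ∈ Finset.range (p.natDegree + 1), p.coeff l * (u i * b₀ ^ l) :=
          Finset.sum_congr rfl (fun i _ => h1 i)
      _ = ∑ l ∈ Finset.range (p.natDegree + 1), ∑ i : Fin k, p.coeff l * (u i * b₀ ^ l) :=
          Finset.sum_comm
      _ = ∑ l ∈ Finset.range (p.natDegree + 1), p.coeff l * (e * b₀ ^ l) := by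
          refine Finset.sum_congr rfl fun l _ => ?_
          rw [← Finset.mul_sum, ← Finset.sum_mul]
  have he : e ≠ 0 := by
    intro he0
    obtain ⟨p₀, hp1, hp0⟩ := hdelta i₀
    have hs : (∑ i, p₀.eval (bv i) * u i) = u i₀ := by
      rw [Finset.sum_eq_single i₀ (fun b _ hb => by rw [hp0 b hb, zero_mul])
        (fun hni => absurd (Finset.mem_univ i₀) hni), hp1, one_mul]
    rw [PSI p₀] at hs
    simp only [he0, zero_mul, mul_zero, Finset.sum_const_zero] at hs
    exact hi₀ hs.symm
  have hhW : (fun i => h.eval (bv i)) ∈ W := (hmemW _).mpr ⟨1, fun i => by rw [one_mul]⟩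
  have h0 : ∑ l ∈ Finset.range (h.natDegree + 1), h.coeff l * (e * b₀ ^ l) = 0 := by
    rw [← PSI h]
    exact hsum _ hhW
  apply hrootless (e * b₀ * e⁻¹)
  rw [eval_eq_sum_range]
  have hterm : ∀ l : ℕ, h.coeff l * (e * b₀ * e⁻¹) ^ l = (h.coeff l * (e * b₀ ^ l)) * e⁻¹ := by
    intro l
    rw [conj_pow'_s19 e b₀ he l, ← mul_assoc]
  rw [Finset.sum_congr rfl (fun l _ => hterm l), ← Finset.sum_mul, h0, zero_mul]
end
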